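/- arXiv:1703.01356 — 4 statements merged into one kernel-verified Lean document; each statement's English description precedes it below -/
import Mathlib

section
/- If a labelled sequent R,E,X ⊢ Y is a labelled tree sequent with equality (LTSE) and R is nonempty, then the result of adding a new edge Rxz where x occurs in R and z is a fresh variable not occurring in the sequent, together with any labelled formulae and equality terms labelled only by variables of the new relation multiset, is again an LTSE. -/
/-- The nodes of the directed graph defined by a relation multiset. -/
def InNodes {V : Type} (R : Multiset (V × V)) (v : V) : Prop :=
  ∃ w, (v, w) ∈ R ∨ (w, v) ∈ R

/-- The underlying undirected graph of the directed graph defined by `R`. -/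
def undirGraph {V : Type} (R : Multiset (V × V)) : SimpleGraph V where
  Adj x y := x ≠ y ∧ ((x, y) ∈ R ∨ (y, x) ∈ R)
  symm := by
    constructor
    intro x y h
    exact ⟨h.1.symm, h.2.symm⟩
  loopless := by
    constructor
    intro x h
    exact h.1 rfl

/-- `R` is treelike: rooted, irreflexive, and undirected-acyclic. -/
def Treelike {V : Type} (R : Multiset (V × V)) : Prop :=
  (∃ r, InNodes R r ∧ ∀ v, InNodes R v → Relation.ReflTransGen (fun a b => (a, b) ∈ R) r v) ∧
  (∀ x, (x, x) ∉ R) ∧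
  (undirGraph R).IsAcyclic

/-- A state variable occurs in the equality mset `E` or in the labelled formula
multisets `X`, `Y` of a labelled sequent. -/
def OccursSeq {V F : Type} (E : Multiset (V × V)) (X Y : Multiset (V × F)) (v : V) : Prop :=
  (∃ A, (v, A) ∈ X) ∨ (∃ A, (v, A) ∈ Y) ∨ (∃ w, (v, w) ∈ E ∨ (w, v) ∈ E)

/-- The labelled sequent `R, E, X ⊢ Y` is a labelled tree sequent with equality (LTSE):
if `R` is nonempty then `R` is treelike and every state variable of `X`, `Y`, `E`
occurs in `R`; if `R` is empty then all labels of `X`, `Y`, `E` coincide. -/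
def IsLTSE {V F : Type} (R E : Multiset (V × V)) (X Y : Multiset (V × F)) : Prop :=
  (R ≠ 0 → Treelike R ∧ ∀ v, OccursSeq E X Y v → InNodes R v) ∧
  (R = 0 → ∀ u v, OccursSeq E X Y u → OccursSeq E X Y v → u = v)

/-- Adding to an LTSE with nonempty `R` a fresh leaf edge `Rxz` (with `x` occurring in `R`
and `z` fresh), together with any labelled formulae and equality terms labelled only by
variables of the new relation multiset, yields again an LTSE. -/
theorem LTSE_add_fresh_leaf {V F : Type} (R E : Multiset (V × V)) (X Y : Multiset (V × F))
    (h : IsLTSE R E X Y) (hR : R ≠ 0) (x z : V)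
    (hx : InNodes R x) (hz₁ : ¬ InNodes R z) (hz₂ : ¬ OccursSeq E X Y z)
    (E' : Multiset (V × V)) (X' Y' : Multiset (V × F))
    (hnew : ∀ v, OccursSeq E' X' Y' v → InNodes ((x, z) ::ₘ R) v) :
    IsLTSE ((x, z) ::ₘ R) (E + E') (X + X') (Y + Y') := by
  classical
  obtain ⟨h1, _⟩ := h
  obtain ⟨⟨⟨r, hr, hreach⟩, hirr, hacyc⟩, hocc⟩ := h1 hR
  have hxz : x ≠ z := fun e => hz₁ (e ▸ hx)
  -- z's only neighbor in the new graph is x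
  have hznbr : ∀ b, (undirGraph ((x, z) ::ₘ R)).Adj z b → b = x := by
    rintro b ⟨hne, hmem | hmem⟩
    · rcases Multiset.mem_cons.1 hmem with hc | hc
      · exact absurd (Prod.ext_iff.1 hc).1.symm hxz
      · exact absurd ⟨b, Or.inl hc⟩ hz₁
    · rcases Multiset.mem_cons.1 hmem with hc | hc
      · exact (Prod.ext_iff.1 hc).1
      · exact absurd ⟨b, Or.inr hc⟩ hz₁
  constructor
  · intro _
    refine ⟨⟨⟨r, ?_, ?_⟩, ?_, ?_⟩, ?_⟩
    · obtain ⟨w, hw⟩ := hr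
      exact ⟨w, hw.imp (Multiset.mem_cons_of_mem) (Multiset.mem_cons_of_mem)⟩
    · -- reachability
      have lift : ∀ v, InNodes R v →
          Relation.ReflTransGen (fun a b => (a, b) ∈ (x, z) ::ₘ R) r v := fun v hv =>
        by
          have hrv := hreach v hv
          clear hv
          induction hrv with
          | refl => exact Relation.ReflTransGen.refl
          | tail _ hab ih => exact ih.tail (Multiset.mem_cons_of_mem hab)
      rintro v ⟨w, hvw | hwv⟩
      · rcases Multiset.mem_cons.1 hvw with hc | hc
        · have h1 : v = x := (Prod.ext_iff.1 hc).1
          exact h1 ▸ lift x hx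
        · exact lift v ⟨w, Or.inl hc⟩
      · rcases Multiset.mem_cons.1 hwv with hc | hc
        · obtain ⟨h1, h2⟩ := Prod.ext_iff.1 hc
          subst h2
          exact (lift x hx).tail (Multiset.mem_cons_self _ _)
        · exact lift v ⟨w, Or.inr hc⟩
    · -- irreflexive
      intro a ha
      rcases Multiset.mem_cons.1 ha with hc | hc
      · obtain ⟨h1, h2⟩ := Prod.ext_iff.1 hc; exact hxz (h1.symm.trans h2)
      · exact hirr a hc
    · -- acyclic
      intro v c hc
      by_cases hzs : z ∈ c.support
      · -- rotate to start at z
        have hc' := hc.rotate hzs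
        set c' := c.rotate z hzs with hc'def
        cases hcc : c' with
        | nil => rw [hcc] at hc'; exact hc'.not_of_nil
        | cons hadj p =>
          rw [hcc] at hc'
          rename_i b
          have hb : x = b := (hznbr b hadj).symm
          subst hb
          have hp : p.IsPath := ((SimpleGraph.Walk.cons_isCycle_iff _ _).1 hc').1
          -- look at p.reverse : Walk z x
          obtain ⟨b2, hadj2, q, hpr⟩ :=
            SimpleGraph.Walk.exists_eq_cons_of_ne (Ne.symm hxz) p.reverse
          have hb2 : x = b2 := (hznbr b2 hadj2).symm
          subst hb2
          have hqp : q.IsPath := by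
            have := hp.reverse
            rw [hpr] at this
            exact ((SimpleGraph.Walk.cons_isPath_iff _ _).1 this).1
          have hqnil : q = SimpleGraph.Walk.nil :=
            SimpleGraph.Walk.isPath_iff_eq_nil.1 hqp
          have hlen : p.length = 1 := by
            have := congrArg SimpleGraph.Walk.length hpr
            rw [hqnil] at this
            simp at this
            omega
          have h3 := hc'.three_le_length
          simp [SimpleGraph.Walk.length_cons, hlen] at h3
      · -- transfer to old graph
        have hedges : ∀ e ∈ c.edges, e ∈ (undirGraph R).edgeSet := by
          intro e he
          induction e using Sym2.inductionOn with
          | hf a b =>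
            have hadj := c.adj_of_mem_edges he
            have ha : a ∈ c.support := c.fst_mem_support_of_mem_edges he
            have hb : b ∈ c.support := c.snd_mem_support_of_mem_edges he
            have haz : a ≠ z := fun e => hzs (e ▸ ha)
            have hbz : b ≠ z := fun e => hzs (e ▸ hb)
            refine ⟨hadj.1, ?_⟩
            rcases hadj.2 with hm | hm
            · rcases Multiset.mem_cons.1 hm with hc2 | hc2
              · exact absurd (Prod.ext_iff.1 hc2).2 hbz
              · exact Or.inl hc2
            · rcases Multiset.mem_cons.1 hm with hc2 | hc2
              · exact absurd (Prod.ext_iff.1 hc2).2 haz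
              · exact Or.inr hc2
        exact hacyc _ (hc.transfer hedges)
    · -- occurrence
      intro v hv
      have hsplit : OccursSeq E X Y v ∨ OccursSeq E' X' Y' v := by
        rcases hv with ⟨A, hA⟩ | ⟨A, hA⟩ | ⟨w, hw⟩
        · rcases Multiset.mem_add.1 hA with hm | hm
          · exact Or.inl (Or.inl ⟨A, hm⟩)
          · exact Or.inr (Or.inl ⟨A, hm⟩)
        · rcases Multiset.mem_add.1 hA with hm | hm
          · exact Or.inl (Or.inr (Or.inl ⟨A, hm⟩))
          · exact Or.inr (Or.inr (Or.inl ⟨A, hm⟩))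
        · rcases hw with hw | hw
          · rcases Multiset.mem_add.1 hw with hm | hm
            · exact Or.inl (Or.inr (Or.inr ⟨_, Or.inl hm⟩))
            · exact Or.inr (Or.inr (Or.inr ⟨_, Or.inl hm⟩))
          · rcases Multiset.mem_add.1 hw with hm | hm
            · exact Or.inl (Or.inr (Or.inr ⟨_, Or.inr hm⟩))
            · exact Or.inr (Or.inr (Or.inr ⟨_, Or.inr hm⟩))
      rcases hsplit with hold | hnew'
      · obtain ⟨w, hw⟩ := hocc v hold
        exact ⟨w, hw.imp Multiset.mem_cons_of_mem Multiset.mem_cons_of_mem⟩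
      · exact hnew v hnew'
  · intro hcontra
    exact absurd hcontra (Multiset.cons_ne_zero)
end

section
/- The substitution operation on labelled sequents is well-behaved with respect to LTSE: if R,E,X ⊢ Y is an LTSE with Rxy, Rxz ∈ R, y ≠ z, and y=z a term that may be removed, then substituting z for y throughout and deleting the edge Rxy yields a relation multiset that is again treelike, provided y is a leaf of the tree defined by R. -/
/-- The substitution replacing every occurrence of `y` by `z`. -/
def substVar {V : Type} [DecidableEq V] (z y : V) : V → V :=
  fun v => if v = y then z else v

open SimpleGraph in
/-- If no vertex is adjacent to `y`, then `y` does not occur in the support of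
any walk starting at a vertex other than `y`. -/
lemma aux_no_adj_not_mem_support {V : Type} {G : SimpleGraph V} {y : V}
    (hy : ∀ d, ¬ G.Adj y d) :
    ∀ {u v : V} (w : G.Walk u v), u ≠ y → y ∉ w.support := by
  intro u v w
  induction w with
  | nil => intro hu; simp [Ne.symm hu]
  | @cons a b c h p ih =>
    intro hu
    have hb : b ≠ y := by
      intro e; subst e; exact hy a h.symm
    simp only [SimpleGraph.Walk.support_cons, List.mem_cons]
    push_neg
    exact ⟨Ne.symm hu, ih hb⟩

open SimpleGraph in
/-- Concatenation of a path with a fresh edge is a path. -/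
lemma aux_isPath_concat {V : Type} {G : SimpleGraph V} {u v w : V} {p : G.Walk u v}
    (hp : p.IsPath) (h : G.Adj v w) (hw : w ∉ p.support) : (p.concat h).IsPath := by
  rw [← SimpleGraph.Walk.isPath_reverse_iff, SimpleGraph.Walk.reverse_concat]
  refine hp.reverse.cons ?_
  rw [SimpleGraph.Walk.support_reverse]
  simpa using hw

/-- If `R` is treelike with `Rxy, Rxz ∈ R`, `y ≠ z`, and `y` is a leaf of the tree
defined by `R` (no outgoing edge), then deleting the edge `Rxy` and substituting
`z` for `y` throughout yields a relation multiset that is again treelike. -/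
theorem treelike_subst_leaf {V : Type} [DecidableEq V] (R : Multiset (V × V))
    (x y z : V) (h : Treelike R)
    (hxy : (x, y) ∈ R) (hxz : (x, z) ∈ R) (hyz : y ≠ z)
    (hleaf : ∀ w, (y, w) ∉ R) :
    Treelike ((R.erase (x, y)).map (Prod.map (substVar z y) (substVar z y))) := by
  classical
  obtain ⟨⟨r, hrN, hr⟩, hirr, hacyc⟩ := h
  set f := substVar z y with hfdef
  set R' := (R.erase (x, y)).map (Prod.map f f) with hR'def
  set G := undirGraph R with hGdef
  set G' := undirGraph R' with hG'def
  have hxny : x ≠ y := by intro e; subst e; exact hirr x hxy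
  have hxnz : x ≠ z := by intro e; subst e; exact hirr x hxz
  have hfy : f y = z := if_pos rfl
  have hfne : ∀ v : V, v ≠ y → f v = v := fun v hv => if_neg hv
  have hfney : ∀ v : V, f v ≠ y := by
    intro v
    by_cases hv : v = y
    · rw [hv, hfy]; exact Ne.symm hyz
    · rw [hfne v hv]; exact hv
  have hfz : ∀ v : V, f v = z → v = z ∨ v = y := by
    intro v hv
    by_cases h1 : v = y
    · exact Or.inr h1
    · rw [hfne v h1] at hv; exact Or.inl hv
  have hfc : ∀ v c : V, f v = c → c ≠ z → v = c := by
    intro v c hv hc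
    by_cases h1 : v = y
    · rw [h1, hfy] at hv; exact absurd hv.symm hc
    · rwa [hfne v h1] at hv
  have hmemR' : ∀ c d : V, (c, d) ∈ R' ↔
      ∃ a b : V, (a, b) ∈ R.erase (x, y) ∧ f a = c ∧ f b = d := by
    intro c d
    rw [hR'def]
    constructor
    · intro hm
      obtain ⟨⟨a, b⟩, hab, he⟩ := Multiset.mem_map.1 hm
      exact ⟨a, b, hab, congrArg Prod.fst he, congrArg Prod.snd he⟩
    · rintro ⟨a, b, hab, ha, hb⟩
      exact Multiset.mem_map.2 ⟨(a, b), hab, by simp [Prod.map, ha, hb]⟩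
  have hsubR : ∀ {p : V × V}, p ∈ R.erase (x, y) → p ∈ R := fun hp =>
    Multiset.mem_of_mem_erase hp
  have hxzE : (x, z) ∈ R.erase (x, y) :=
    (Multiset.mem_erase_of_ne (fun e => hyz ((congrArg Prod.snd e)).symm)).2 hxz
  have hadjR : ∀ {a b : V}, (a, b) ∈ R → G.Adj a b := by
    intro a b hab
    refine ⟨?_, Or.inl hab⟩
    intro e; subst e; exact hirr a hab
  have hnoadjy : ∀ d, ¬ G'.Adj y d := by
    rintro d ⟨hne, hd⟩
    cases hd with
    | inl h1 =>
      obtain ⟨a, b, _, ha, _⟩ := (hmemR' y d).1 h1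
      exact hfney a ha
    | inr h1 =>
      obtain ⟨a, b, _, _, hb⟩ := (hmemR' d y).1 h1
      exact hfney b hb
  have hG'toG : ∀ {a b : V}, G'.Adj a b → a ≠ z → b ≠ z → G.Adj a b := by
    rintro a b ⟨hne, hab⟩ ha hb
    cases hab with
    | inl h1 =>
      obtain ⟨u, v, huv, hu, hv⟩ := (hmemR' a b).1 h1
      rw [hfc u a hu ha, hfc v b hv hb] at huv
      exact hadjR (hsubR huv)
    | inr h1 =>
      obtain ⟨u, v, huv, hu, hv⟩ := (hmemR' b a).1 h1
      rw [hfc u b hu hb, hfc v a hv ha] at huv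
      exact (hadjR (hsubR huv)).symm
  have hadjz : ∀ {d : V}, G'.Adj z d → G.Adj z d ∨ (d, y) ∈ R := by
    rintro d ⟨hne, hd⟩
    cases hd with
    | inl h1 =>
      obtain ⟨u, v, huv, hu, hv⟩ := (hmemR' z d).1 h1
      rw [hfc v d hv (Ne.symm hne)] at huv
      rcases hfz u hu with h2 | h2
      · rw [h2] at huv; exact Or.inl (hadjR (hsubR huv))
      · rw [h2] at huv; exact absurd (hsubR huv) (hleaf d)
    | inr h1 =>
      obtain ⟨u, v, huv, hu, hv⟩ := (hmemR' d z).1 h1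
      rw [hfc u d hu (Ne.symm hne)] at huv
      rcases hfz v hv with h2 | h2
      · rw [h2] at huv; exact Or.inl (hadjR (hsubR huv)).symm
      · rw [h2] at huv; exact Or.inr (hsubR huv)
  have hpu := SimpleGraph.isAcyclic_iff_path_unique.mp hacyc
  -- (z, y) ∉ R
  have hzy : (z, y) ∉ R := by
    intro hz
    have hP1 : (SimpleGraph.Walk.cons (hadjR hz).symm SimpleGraph.Walk.nil :
        G.Walk y z).IsPath := by
      simp [SimpleGraph.Walk.cons_isPath_iff, hyz]
    have hP2 : (SimpleGraph.Walk.cons (hadjR hxy).symm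
        (SimpleGraph.Walk.cons (hadjR hxz) SimpleGraph.Walk.nil) : G.Walk y z).IsPath := by
      simp [SimpleGraph.Walk.cons_isPath_iff, hyz, hxny, hxnz, Ne.symm hxny, Ne.symm hxnz]
    have he := hpu ⟨_, hP1⟩ ⟨_, hP2⟩
    have hl := congrArg (fun p : G.Path y z => p.val.length) he
    simp [SimpleGraph.Walk.length_cons] at hl
  -- irreflexivity of R'
  have hirr' : ∀ c, (c, c) ∉ R' := by
    intro c hc
    obtain ⟨a, b, hab, ha, hb⟩ := (hmemR' c c).1 hc
    by_cases hay : a = y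
    · rw [hay] at hab; exact hleaf b (hsubR hab)
    · rw [hfne a hay] at ha
      by_cases hby : b = y
      · rw [hby, hfy] at hb
        have haz : a = z := ha.trans hb.symm
        rw [hby, haz] at hab
        exact hzy (hsubR hab)
      · rw [hfne b hby] at hb
        rw [ha, hb] at hab
        exact hirr c (hsubR hab)
  -- root
  have hry : r ≠ y := by
    intro e
    rcases (hr x ⟨y, Or.inl hxy⟩).cases_head with he | ⟨c, hc, _⟩
    · exact hxny (he.symm.trans e)
    · rw [e] at hc
      exact hleaf c hc
  have hfr : f r = r := hfne r hry
  have hlift : ∀ v, Relation.ReflTransGen (fun a b => (a, b) ∈ R) r v →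
      Relation.ReflTransGen (fun a b => (a, b) ∈ R') r (f v) := by
    intro v hv
    induction hv with
    | refl => rw [hfr]
    | @tail b c hab hbc ih =>
      have hby : b ≠ y := by intro e; subst e; exact hleaf c hbc
      by_cases he : (b, c) ∈ R.erase (x, y)
      · exact ih.tail ((hmemR' (f b) (f c)).2 ⟨b, c, he, rfl, rfl⟩)
      · have hbc' : (b, c) = (x, y) := by
          by_contra hne
          exact he ((Multiset.mem_erase_of_ne hne).2 hbc)
        have hbx : b = x := congrArg Prod.fst hbc'
        have hcy : c = y := congrArg Prod.snd hbc'
        subst hbx; subst hcy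
        rw [hfne b hby] at ih
        rw [hfy]
        exact ih.tail ((hmemR' b z).2 ⟨b, z, hxzE, hfne b hby, hfne z (Ne.symm hyz)⟩)
  have hrout : ∃ w, (r, w) ∈ R := by
    rcases (hr x ⟨y, Or.inl hxy⟩).cases_head with he | ⟨c, hc, _⟩
    · exact ⟨y, he ▸ hxy⟩
    · exact ⟨c, hc⟩
  have hrN' : InNodes R' r := by
    obtain ⟨w, hw⟩ := hrout
    by_cases he : (r, w) ∈ R.erase (x, y)
    · exact ⟨f w, Or.inl ((hmemR' r (f w)).2 ⟨r, w, he, hfr, rfl⟩)⟩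
    · have hrw : (r, w) = (x, y) := by
        by_contra hne
        exact he ((Multiset.mem_erase_of_ne hne).2 hw)
      have hrx : r = x := congrArg Prod.fst hrw
      exact ⟨z, Or.inl ((hmemR' r z).2
        ⟨x, z, hxzE, by rw [hfne x hxny, hrx], hfne z (Ne.symm hyz)⟩)⟩
  refine ⟨⟨r, hrN', ?_⟩, hirr', ?_⟩
  · rintro v ⟨w, hvw | hvw⟩
    · obtain ⟨a, b, hab, ha, _⟩ := (hmemR' v w).1 hvw
      have := hlift a (hr a ⟨b, Or.inl (hsubR hab)⟩)
      rwa [ha] at this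
    · obtain ⟨a, b, hab, _, hb⟩ := (hmemR' w v).1 hvw
      have := hlift b (hr b ⟨a, Or.inr (hsubR hab)⟩)
      rwa [hb] at this
  -- acyclicity
  · intro v c hc
    have hvney : v ≠ y := by
      intro e; subst e
      cases c with
      | nil => exact SimpleGraph.Walk.IsCycle.not_of_nil hc
      | cons hadj p => exact hnoadjy _ hadj
    by_cases hzsup : z ∈ c.support
    · -- rotate the cycle to be based at z
      have hc' := hc.rotate hzsup
      revert hc'
      generalize c.rotate z hzsup = c₀
      intro hc'
      cases c₀ with
      | nil => exact SimpleGraph.Walk.IsCycle.not_of_nil hc'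
      | @cons _ v₁ _ h₁ p =>
        obtain ⟨hppath, _⟩ := (SimpleGraph.Walk.cons_isCycle_iff p h₁).1 hc'
        have hv₁z : v₁ ≠ z := Ne.symm h₁.ne
        have hv₁y : v₁ ≠ y := by
          intro e; subst e; exact hnoadjy z h₁.symm
        have hpr : p.reverse.IsPath := hppath.reverse
        obtain ⟨vₖ, h₂, q, hq⟩ := SimpleGraph.Walk.exists_eq_cons_of_ne h₁.ne p.reverse
        rw [hq] at hpr
        obtain ⟨hqpath, hzq⟩ := (SimpleGraph.Walk.cons_isPath_iff h₂ q).1 hpr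
        have hvₖy : vₖ ≠ y := by
          intro e; subst e; exact hnoadjy z h₂.symm
        have hql : 1 ≤ q.length := by
          have h3 := hc'.three_le_length
          have h4 : p.reverse.length = q.length + 1 := by
            rw [hq, SimpleGraph.Walk.length_cons]
          rw [SimpleGraph.Walk.length_reverse] at h4
          rw [SimpleGraph.Walk.length_cons, h4] at h3
          omega
        have hyp : y ∉ p.support := aux_no_adj_not_mem_support hnoadjy p hv₁y
        have hyq : y ∉ q.support := by
          intro hy
          apply hyp
          have h5 : y ∈ p.reverse.support := by
            rw [hq, SimpleGraph.Walk.support_cons]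
            exact List.mem_cons_of_mem _ hy
          rw [SimpleGraph.Walk.support_reverse] at h5
          exact List.mem_reverse.mp h5
        have hedges : ∀ e ∈ q.edges, e ∈ G.edgeSet := by
          intro e he
          induction e with
          | h a b =>
            have ha := SimpleGraph.Walk.fst_mem_support_of_mem_edges q he
            have hb := SimpleGraph.Walk.snd_mem_support_of_mem_edges q he
            have h6 : G'.Adj a b := (SimpleGraph.mem_edgeSet _).1 (q.edges_subset_edgeSet he)
            refine (SimpleGraph.mem_edgeSet _).2 (hG'toG h6 ?_ ?_)
            · intro e1; subst e1; exact hzq ha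
            · intro e1; subst e1; exact hzq hb
        set q' := q.transfer G hedges with hq'def
        have hq'path : q'.IsPath := hqpath.transfer hedges
        have hzq' : z ∉ q'.support := by
          rw [hq'def, SimpleGraph.Walk.support_transfer]; exact hzq
        have hyq' : y ∉ q'.support := by
          rw [hq'def, SimpleGraph.Walk.support_transfer]; exact hyq
        have hq'len : q'.length = q.length := SimpleGraph.Walk.length_transfer q hedges
        rcases hadjz h₁ with hA1 | hA1 <;> rcases hadjz h₂ with hA2 | hA2
        · -- both neighbors of z in G : two z–v₁ paths
          have hP : (SimpleGraph.Walk.cons hA1 SimpleGraph.Walk.nil :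
              G.Walk z v₁).IsPath := by
            simp [SimpleGraph.Walk.cons_isPath_iff, h₁.ne]
          have hQ : (SimpleGraph.Walk.cons hA2 q').IsPath :=
            hq'path.cons hzq'
          have he := hpu ⟨_, hP⟩ ⟨_, hQ⟩
          have hl := congrArg (fun p : G.Path z v₁ => p.val.length) he
          simp only [SimpleGraph.Walk.length_cons, SimpleGraph.Walk.length_nil] at hl
          omega
        · -- Adj z v₁ and (vₖ, y) ∈ R : two y–z paths
          have hP : (SimpleGraph.Walk.cons (hadjR hxy).symm
              (SimpleGraph.Walk.cons (hadjR hxz) SimpleGraph.Walk.nil) :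
              G.Walk y z).IsPath := by
            simp [SimpleGraph.Walk.cons_isPath_iff, hyz, hxny, hxnz, Ne.symm hxny, Ne.symm hxnz]
          have hQc : (q'.concat hA1.symm).IsPath :=
            aux_isPath_concat hq'path hA1.symm hzq'
          have hQ : (SimpleGraph.Walk.cons (hadjR hA2).symm
              (q'.concat hA1.symm)).IsPath := by
            refine hQc.cons ?_
            rw [SimpleGraph.Walk.support_concat]
            simp only [List.concat_eq_append, List.mem_append, List.mem_singleton]
            push_neg
            exact ⟨hyq', hyz⟩
          have he := hpu ⟨_, hP⟩ ⟨_, hQ⟩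
          have hl := congrArg (fun p : G.Path y z => p.val.length) he
          simp only [SimpleGraph.Walk.length_cons, SimpleGraph.Walk.length_nil,
            SimpleGraph.Walk.length_concat] at hl
          omega
        · -- (v₁, y) ∈ R and Adj z vₖ : two y–z paths
          have hP : (SimpleGraph.Walk.cons (hadjR hxy).symm
              (SimpleGraph.Walk.cons (hadjR hxz) SimpleGraph.Walk.nil) :
              G.Walk y z).IsPath := by
            simp [SimpleGraph.Walk.cons_isPath_iff, hyz, hxny, hxnz, Ne.symm hxny, Ne.symm hxnz]
          have hQc : (q'.reverse.concat hA2.symm).IsPath := by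
            refine aux_isPath_concat hq'path.reverse hA2.symm ?_
            rw [SimpleGraph.Walk.support_reverse]
            simpa using hzq'
          have hQ : (SimpleGraph.Walk.cons (hadjR hA1).symm
              (q'.reverse.concat hA2.symm)).IsPath := by
            refine hQc.cons ?_
            rw [SimpleGraph.Walk.support_concat]
            simp only [List.concat_eq_append, List.mem_append, List.mem_singleton]
            push_neg
            refine ⟨?_, hyz⟩
            rw [SimpleGraph.Walk.support_reverse]
            simpa using hyq'
          have he := hpu ⟨_, hP⟩ ⟨_, hQ⟩
          have hl := congrArg (fun p : G.Path y z => p.val.length) he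
          simp only [SimpleGraph.Walk.length_cons, SimpleGraph.Walk.length_nil,
            SimpleGraph.Walk.length_concat, SimpleGraph.Walk.length_reverse] at hl
          omega
        · -- (v₁, y) ∈ R and (vₖ, y) ∈ R : two y–v₁ paths
          have hP : (SimpleGraph.Walk.cons (hadjR hA1).symm SimpleGraph.Walk.nil :
              G.Walk y v₁).IsPath := by
            simp [SimpleGraph.Walk.cons_isPath_iff, Ne.symm hv₁y]
          have hQ : (SimpleGraph.Walk.cons (hadjR hA2).symm q').IsPath :=
            hq'path.cons hyq'
          have he := hpu ⟨_, hP⟩ ⟨_, hQ⟩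
          have hl := congrArg (fun p : G.Path y v₁ => p.val.length) he
          simp only [SimpleGraph.Walk.length_cons, SimpleGraph.Walk.length_nil] at hl
          omega
    · -- cycle avoids z : transfer to G
      have hysup : y ∉ c.support := aux_no_adj_not_mem_support hnoadjy c hvney
      have hedges : ∀ e ∈ c.edges, e ∈ G.edgeSet := by
        intro e he
        induction e with
        | h a b =>
          have ha := SimpleGraph.Walk.fst_mem_support_of_mem_edges c he
          have hb := SimpleGraph.Walk.snd_mem_support_of_mem_edges c he
          have h6 : G'.Adj a b := (SimpleGraph.mem_edgeSet _).1 (c.edges_subset_edgeSet he)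
          refine (SimpleGraph.mem_edgeSet _).2 (hG'toG h6 ?_ ?_)
          · intro e1; subst e1; exact hzsup ha
          · intro e1; subst e1; exact hzsup hb
      exact hacyc (c.transfer G hedges) (hc.transfer hedges)
end

section
/- The map from indexed nested sequents to labelled tree sequents with equality is injective up to renaming of state variables: two indexed nested sequents mapping to the same LTSE (up to a bijective renaming of state variables and index renaming) are equal up to renaming of indices. -/
/-- A labelled sequent `R, E, X ⊢ Y` over state variables `List ℕ` and formulas `F`:
a relation multiset `R`, an equality multiset `E`, and labelled formula multisets
`X` (antecedent) and `Y` (succedent). -/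
structure LTSE (F : Type) where
  R : Multiset (List ℕ × List ℕ)
  E : Multiset (List ℕ × List ℕ)
  X : Multiset (List ℕ × F)
  Y : Multiset (List ℕ × F)

/-- An indexed nested sequent: a finite tree (of positions, closed under parents,
containing the root `[]`), each of whose nodes is decorated with a traditional
sequent `ant p ⊢ suc p` of formula multisets and a natural-number index `idx p`. -/
structure INS (F : Type) where
  pos : Finset (List ℕ)
  root_mem : ([] : List ℕ) ∈ pos
  down : ∀ (p : List ℕ) (k : ℕ), p ++ [k] ∈ pos → p ∈ pos
  ant : List ℕ → Multiset F
  suc : List ℕ → Multiset F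
  idx : List ℕ → ℕ

/-- The translation of an indexed nested sequent into a labelled tree sequent with
equality: `R` encodes the tree edges (each non-root position with its parent),
`E` contains `u = v` for every pair of distinct positions carrying the same index,
and the formulae of each node are labelled by that node's position. -/
def toLTSE {F : Type} (s : INS F) : LTSE F where
  R := ((s.pos.filter (fun p => p ≠ [])).val).map (fun p => (p.dropLast, p))
  E := (((s.pos ×ˢ s.pos).filter (fun q => q.1 ≠ q.2 ∧ s.idx q.1 = s.idx q.2)).val)
  X := s.pos.val.bind (fun p => (s.ant p).map (fun A => (p, A)))
  Y := s.pos.val.bind (fun p => (s.suc p).map (fun A => (p, A)))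

/-- Two labelled sequents are the same LTSE up to a bijective renaming `π` of state
variables: `π` preserves the relation terms, the consequences of the equality mset
(in the theory of equality), and the labelled formula multisets. -/
def LTSE.Equiv {F : Type} (a b : LTSE F) : Prop :=
  ∃ π : List ℕ ≃ List ℕ,
    (∀ u v, (u, v) ∈ a.R ↔ (π u, π v) ∈ b.R) ∧
    (∀ u v, Relation.EqvGen (fun p q => (p, q) ∈ a.E) u v ↔
      Relation.EqvGen (fun p q => (p, q) ∈ b.E) (π u) (π v)) ∧
    a.X.map (fun q => (π q.1, q.2)) = b.X ∧
    a.Y.map (fun q => (π q.1, q.2)) = b.Y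

/-- Two indexed nested sequents are equal up to renaming of indices (and up to the
tree isomorphism `φ` relating their underlying decorated trees): the decorations
correspond, and the indices correspond under an injective renaming `g`. -/
def INS.EqUpToIndices {F : Type} (s t : INS F) : Prop :=
  ∃ (φ : List ℕ ≃ List ℕ) (g : ℕ → ℕ),
    Function.Injective g ∧
    t.pos = s.pos.image φ ∧
    (∀ p ∈ s.pos, p ≠ [] → φ p ≠ [] ∧ (φ p).dropLast = φ p.dropLast) ∧
    φ [] = [] ∧
    (∀ p ∈ s.pos, t.ant (φ p) = s.ant p) ∧
    (∀ p ∈ s.pos, t.suc (φ p) = s.suc p) ∧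
    (∀ p ∈ s.pos, t.idx (φ p) = g (s.idx p))

private lemma filter_bind' {α β : Type*} (m : Multiset α) (f : α → Multiset β)
    (p : β → Prop) [DecidablePred p] :
    (m.bind f).filter p = m.bind (fun a => (f a).filter p) := by
  induction m using Multiset.induction_on <;> simp [*]

private lemma bind_if' {α β : Type*} [DecidableEq α] (m : Multiset α) (hm : m.Nodup)
    (a : α) (ha : a ∈ m) (h : α → Multiset β) :
    (m.bind fun q => if q = a then h q else 0) = h a := by
  induction m using Multiset.induction_on with
  | empty => simp at ha
  | cons b m ih =>
    simp only [Multiset.nodup_cons] at hm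
    rcases Multiset.mem_cons.1 ha with rfl | ha'
    · rw [Multiset.cons_bind, if_pos rfl]
      have h0 : (m.bind fun q => if q = a then h q else 0) = 0 := by
        apply Multiset.eq_zero_of_forall_notMem
        intro x hx
        rw [Multiset.mem_bind] at hx
        obtain ⟨q, hq, hxq⟩ := hx
        split at hxq
        · subst q; exact hm.1 hq
        · simp at hxq
      rw [h0, add_zero]
    · rw [Multiset.cons_bind, if_neg (by rintro rfl; exact hm.1 ha'), zero_add]
      exact ih hm.2 ha'

private lemma bind_label_eq {F : Type} (m : Multiset (List ℕ)) (hm : m.Nodup)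
    (ι : List ℕ → List ℕ) (hι : Function.Injective ι)
    (f g : List ℕ → Multiset F)
    (h : m.bind (fun p => (f p).map (fun A => (ι p, A)))
       = m.bind (fun p => (g p).map (fun A => (ι p, A)))) :
    ∀ p ∈ m, f p = g p := by
  intro p hp
  have key : ∀ f' : List ℕ → Multiset F,
      ((m.bind (fun q => (f' q).map (fun A => (ι q, A)))).filter
        (fun x => x.1 = ι p)).map Prod.snd = f' p := by
    intro f'
    rw [filter_bind']
    have : (m.bind fun q => ((f' q).map (fun A => (ι q, A))).filter (fun x => x.1 = ι p))
        = m.bind fun q => if q = p then (f' q).map (fun A => (ι q, A)) else 0 := by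
      apply Multiset.bind_congr
      intro q hq
      by_cases hqp : q = p
      · subst hqp
        rw [if_pos rfl, Multiset.filter_eq_self]
        intro x hx
        rw [Multiset.mem_map] at hx
        obtain ⟨A, _, rfl⟩ := hx
        rfl
      · rw [if_neg hqp, Multiset.filter_eq_nil]
        intro x hx
        rw [Multiset.mem_map] at hx
        obtain ⟨A, _, rfl⟩ := hx
        simp only
        exact fun hc => hqp (hι hc)
    rw [this, bind_if' m hm p hp, Multiset.map_map]
    simp
  have := congrArg (fun z : Multiset (List ℕ × F) =>
    (z.filter (fun x => x.1 = ι p)).map Prod.snd) h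
  simpa only [key] using this

private lemma memR {F : Type} (s : INS F) (u v : List ℕ) :
    (u, v) ∈ (toLTSE s).R ↔ v ∈ s.pos ∧ v ≠ [] ∧ u = v.dropLast := by
  simp only [toLTSE, Multiset.mem_map, Finset.mem_val, Finset.mem_filter, Prod.mk.injEq]
  constructor
  · rintro ⟨p, ⟨hp, hpne⟩, rfl, rfl⟩; exact ⟨hp, hpne, rfl⟩
  · rintro ⟨hv, hvne, rfl⟩; exact ⟨v, ⟨hv, hvne⟩, rfl, rfl⟩

private lemma memE {F : Type} (s : INS F) (u v : List ℕ) :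
    (u, v) ∈ (toLTSE s).E ↔ u ∈ s.pos ∧ v ∈ s.pos ∧ u ≠ v ∧ s.idx u = s.idx v := by
  simp only [toLTSE, Finset.mem_val, Finset.mem_filter, Finset.mem_product]
  tauto

private lemma eqv_char {F : Type} (s : INS F) (u v : List ℕ) :
    Relation.EqvGen (fun p q => (p, q) ∈ (toLTSE s).E) u v ↔
      u = v ∨ (u ∈ s.pos ∧ v ∈ s.pos ∧ s.idx u = s.idx v) := by
  constructor
  · intro h
    induction h with
    | rel x y hxy => rw [memE] at hxy; exact Or.inr ⟨hxy.1, hxy.2.1, hxy.2.2.2⟩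
    | refl x => exact Or.inl rfl
    | symm x y _ ih =>
      rcases ih with rfl | ⟨h1, h2, h3⟩
      · exact Or.inl rfl
      · exact Or.inr ⟨h2, h1, h3.symm⟩
    | trans x y z _ _ ih1 ih2 =>
      rcases ih1 with rfl | ⟨h1, h2, h3⟩
      · exact ih2
      · rcases ih2 with rfl | ⟨h4, h5, h6⟩
        · exact Or.inr ⟨h1, h2, h3⟩
        · exact Or.inr ⟨h1, h5, h3.trans h6⟩
  · rintro (rfl | ⟨h1, h2, h3⟩)
    · exact Relation.EqvGen.refl u
    · by_cases huv : u = v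
      · subst huv; exact Relation.EqvGen.refl u
      · exact Relation.EqvGen.rel _ _ ((memE s u v).2 ⟨h1, h2, huv, h3⟩)

private lemma child_of_root {F : Type} (s : INS F) (p₀ : List ℕ) (hp₀ : p₀ ∈ s.pos)
    (hne : p₀ ≠ []) : ∃ c ∈ s.pos, c ≠ [] ∧ c.dropLast = [] := by
  have main : ∀ n (p : List ℕ), p.length ≤ n → p ∈ s.pos → p ≠ [] →
      ∃ c ∈ s.pos, c ≠ [] ∧ c.dropLast = [] := by
    intro n
    induction n with
    | zero =>
      intro p hlen hp hne
      exact absurd (List.length_eq_zero_iff.1 (Nat.le_zero.1 hlen)) hne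
    | succ n ih =>
      intro p hlen hp hne
      by_cases hd : p.dropLast = []
      · exact ⟨p, hp, hne, hd⟩
      · have hmem : p.dropLast ∈ s.pos := by
          apply s.down p.dropLast (p.getLast hne)
          rw [List.dropLast_append_getLast hne]
          exact hp
        apply ih p.dropLast _ hmem hd
        have h1 : p.dropLast.length = p.length - 1 := List.length_dropLast
        have h2 : 1 ≤ p.length := List.length_pos_iff.2 hne
        omega
  exact main p₀.length p₀ le_rfl hp₀ hne

/-- The map from indexed nested sequents to labelled tree sequents with equality is
injective up to renaming of state variables: two INS mapping to the same LTSE up to a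
bijective renaming of state variables are equal up to renaming of indices. -/
theorem toLTSE_injective_up_to_renaming {F : Type} (s t : INS F)
    (h : LTSE.Equiv (toLTSE s) (toLTSE t)) :
    INS.EqUpToIndices s t := by
  classical
  obtain ⟨π, hR, hE, hX, hY⟩ := h
  by_cases hsing : ∀ p ∈ s.pos, p = []
  · -- singleton case
    have hspos : s.pos = {[]} := by
      apply Finset.ext
      intro p
      simp only [Finset.mem_singleton]
      exact ⟨fun hp => hsing p hp, fun hp => hp ▸ s.root_mem⟩
    have htpos : t.pos = {[]} := by
      apply Finset.ext
      intro q
      simp only [Finset.mem_singleton]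
      refine ⟨fun hq => ?_, fun hq => hq ▸ t.root_mem⟩
      by_contra hqne
      have hmemR : (q.dropLast, q) ∈ (toLTSE t).R := (memR t _ _).2 ⟨hq, hqne, rfl⟩
      have h2 : (π.symm q.dropLast, π.symm q) ∈ (toLTSE s).R := by
        rw [hR]
        simpa using hmemR
      rw [memR] at h2
      exact h2.2.1 (hsing _ h2.1)
    refine ⟨Equiv.refl _, Equiv.swap (s.idx []) (t.idx []), (Equiv.swap _ _).injective,
      ?_, ?_, rfl, ?_, ?_, ?_⟩
    · rw [hspos, htpos]; simp
    · intro p hp hne; exact absurd (hsing p hp) hne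
    · intro p hp
      have hp0 : p = [] := hsing p hp
      subst hp0
      have h1 : ((toLTSE t).X).map Prod.snd = t.ant [] := by
        simp only [toLTSE]
        rw [htpos]
        simp [Multiset.singleton_bind, Multiset.map_map]
      have h2 : (((toLTSE s).X).map (fun q => (π q.1, q.2))).map Prod.snd = s.ant [] := by
        simp only [toLTSE]
        rw [hspos]
        simp [Multiset.singleton_bind, Multiset.map_map]
      show t.ant [] = s.ant []
      rw [← h1, ← hX, h2]
    · intro p hp
      have hp0 : p = [] := hsing p hp
      subst hp0
      have h1 : ((toLTSE t).Y).map Prod.snd = t.suc [] := by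
        simp only [toLTSE]
        rw [htpos]
        simp [Multiset.singleton_bind, Multiset.map_map]
      have h2 : (((toLTSE s).Y).map (fun q => (π q.1, q.2))).map Prod.snd = s.suc [] := by
        simp only [toLTSE]
        rw [hspos]
        simp [Multiset.singleton_bind, Multiset.map_map]
      show t.suc [] = s.suc []
      rw [← h1, ← hY, h2]
    · intro p hp
      have hp0 : p = [] := hsing p hp
      subst hp0
      show t.idx [] = Equiv.swap (s.idx []) (t.idx []) (s.idx [])
      rw [Equiv.swap_apply_left]
  · -- general case
    push_neg at hsing
    obtain ⟨p₀, hp₀mem, hp₀ne⟩ := hsing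
    have hfwd : ∀ p ∈ s.pos, p ≠ [] →
        π p ∈ t.pos ∧ π p ≠ [] ∧ (π p).dropLast = π p.dropLast := by
      intro p hp hne
      have hmemR : (p.dropLast, p) ∈ (toLTSE s).R := (memR s _ _).2 ⟨hp, hne, rfl⟩
      have h2 := (hR _ _).1 hmemR
      rw [memR] at h2
      exact ⟨h2.1, h2.2.1, h2.2.2.symm⟩
    have hbwd : ∀ q ∈ t.pos, q ≠ [] → π.symm q ∈ s.pos ∧ π.symm q ≠ [] := by
      intro q hq hqne
      have hmemR : (q.dropLast, q) ∈ (toLTSE t).R := (memR t _ _).2 ⟨hq, hqne, rfl⟩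
      have h2 : (π.symm q.dropLast, π.symm q) ∈ (toLTSE s).R := by
        rw [hR]
        simpa using hmemR
      rw [memR] at h2
      exact ⟨h2.1, h2.2.1⟩
    have hroot : π [] = [] := by
      obtain ⟨c, hc, hcne, hcd⟩ := child_of_root s p₀ hp₀mem hp₀ne
      obtain ⟨h1, h2, h3⟩ := hfwd c hc hcne
      by_contra hne
      have hπ0 : π [] ∈ t.pos := by
        have h4 : (π c).dropLast ++ [(π c).getLast h2] ∈ t.pos := by
          rw [List.dropLast_append_getLast h2]; exact h1
        have h5 := t.down _ _ h4
        rw [h3, hcd] at h5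
        exact h5
      have h6 := hbwd (π []) hπ0 hne
      exact h6.2 (Equiv.symm_apply_apply π [])
    have hmap : ∀ p ∈ s.pos, π p ∈ t.pos := by
      intro p hp
      by_cases hpe : p = []
      · subst hpe; rw [hroot]; exact t.root_mem
      · exact (hfwd p hp hpe).1
    have hpos : t.pos = s.pos.image π := by
      apply Finset.ext
      intro q
      rw [Finset.mem_image]
      constructor
      · intro hq
        by_cases hqe : q = []
        · exact ⟨[], s.root_mem, by rw [hroot, hqe]⟩
        · exact ⟨π.symm q, (hbwd q hq hqe).1, Equiv.apply_symm_apply π q⟩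
      · rintro ⟨p, hp, rfl⟩
        exact hmap p hp
    have hidx : ∀ p ∈ s.pos, ∀ q ∈ s.pos,
        (s.idx p = s.idx q ↔ t.idx (π p) = t.idx (π q)) := by
      intro p hp q hq
      constructor
      · intro hpq
        have h2 := (hE p q).1 ((eqv_char s p q).2 (Or.inr ⟨hp, hq, hpq⟩))
        rw [eqv_char] at h2
        rcases h2 with h2 | h2
        · rw [h2]
        · exact h2.2.2
      · intro hpq
        have h2 := (hE p q).2 ((eqv_char t _ _).2 (Or.inr ⟨hmap p hp, hmap q hq, hpq⟩))
        rw [eqv_char] at h2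
        rcases h2 with rfl | h2
        · rfl
        · exact h2.2.2
    have himg : (s.pos.image π).val = s.pos.val.map π := by
      rw [Finset.image_val, Multiset.dedup_eq_self.2 (s.pos.nodup.map π.injective)]
    have hant : ∀ p ∈ s.pos.val, s.ant p = t.ant (π p) := by
      apply bind_label_eq s.pos.val s.pos.nodup π π.injective
      have hXval : (toLTSE t).X
          = s.pos.val.bind (fun p => (t.ant (π p)).map (fun A => (π p, A))) := by
        simp only [toLTSE]
        rw [hpos, himg, Multiset.bind_map]
      have hXl : (toLTSE s).X.map (fun q => (π q.1, q.2))
          = s.pos.val.bind (fun p => (s.ant p).map (fun A => (π p, A))) := by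
        simp only [toLTSE, Multiset.map_bind, Multiset.map_map]
        rfl
      rw [← hXl, ← hXval, hX]
    have hsuc : ∀ p ∈ s.pos.val, s.suc p = t.suc (π p) := by
      apply bind_label_eq s.pos.val s.pos.nodup π π.injective
      have hYval : (toLTSE t).Y
          = s.pos.val.bind (fun p => (t.suc (π p)).map (fun A => (π p, A))) := by
        simp only [toLTSE]
        rw [hpos, himg, Multiset.bind_map]
      have hYl : (toLTSE s).Y.map (fun q => (π q.1, q.2))
          = s.pos.val.bind (fun p => (s.suc p).map (fun A => (π p, A))) := by
        simp only [toLTSE, Multiset.map_bind, Multiset.map_map]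
        rfl
      rw [← hYl, ← hYval, hY]
    -- construct the index renaming
    haveI hinf : Infinite ((↑(t.pos.image t.idx) : Set ℕ)ᶜ : Set ℕ) :=
      Set.infinite_coe_iff.2 ((t.pos.image t.idx).finite_toSet.infinite_compl)
    obtain ⟨D⟩ := nonempty_denumerable ((↑(t.pos.image t.idx) : Set ℕ)ᶜ : Set ℕ)
    let e : ((↑(t.pos.image t.idx) : Set ℕ)ᶜ : Set ℕ) ≃ ℕ := @Denumerable.eqv _ D
    set g : ℕ → ℕ := fun i =>
      if h : ∃ p ∈ s.pos, s.idx p = i then t.idx (π h.choose) else (e.symm i : ℕ)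
      with hgdef
    have hgspec : ∀ p ∈ s.pos, g (s.idx p) = t.idx (π p) := by
      intro p hp
      have hex : ∃ q ∈ s.pos, s.idx q = s.idx p := ⟨p, hp, rfl⟩
      rw [hgdef]
      simp only [dif_pos hex]
      exact (hidx _ hex.choose_spec.1 p hp).1 hex.choose_spec.2
    have hginj : Function.Injective g := by
      intro i₁ i₂ hg
      rw [hgdef] at hg
      simp only at hg
      split_ifs at hg with h1 h2 h2
      · have h3 := (hidx _ h1.choose_spec.1 _ h2.choose_spec.1).2 hg
        rw [h1.choose_spec.2, h2.choose_spec.2] at h3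
        exact h3
      · exfalso
        have hmem1 : t.idx (π h1.choose) ∈ t.pos.image t.idx :=
          Finset.mem_image_of_mem t.idx (hmap _ h1.choose_spec.1)
        have hmem2 := (e.symm i₂).2
        rw [← hg] at hmem2
        exact hmem2 (by exact_mod_cast hmem1)
      · exfalso
        have hmem1 : t.idx (π h2.choose) ∈ t.pos.image t.idx :=
          Finset.mem_image_of_mem t.idx (hmap _ h2.choose_spec.1)
        have hmem2 := (e.symm i₁).2
        rw [hg] at hmem2
        exact hmem2 (by exact_mod_cast hmem1)
      · exact e.symm.injective (Subtype.coe_injective hg)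
    refine ⟨π, g, hginj, hpos, ?_, hroot, ?_, ?_, ?_⟩
    · intro p hp hne
      exact ⟨(hfwd p hp hne).2.1, (hfwd p hp hne).2.2⟩
    · intro p hp
      exact (hant p hp).symm
    · intro p hp
      exact (hsuc p hp).symm
    · intro p hp
      exact (hgspec p hp).symm
end

section
/- Let Ω be a finite set of formulas. Any 2-reduced lrDAG satisfying the separation property (S), of height at most N, with node labels being multisets over Ω in which no formula occurs more than twice, has a number of nodes bounded by a function of N and |Ω| only. -/
set_option linter.unusedSectionVars false

namespace TRD

attribute [local instance] Classical.propDecidable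

variable {F V : Type} [Fintype V]

/-- reachability order -/
def rle (E : V → V → Prop) (a b : V) : Prop := Relation.ReflTransGen E a b

def rlt (E : V → V → Prop) (a b : V) : Prop := rle E a b ∧ a ≠ b

noncomputable def Anc (E : V → V → Prop) (v : V) : Finset V :=
  Finset.univ.filter (fun a => rle E a v)

noncomputable def upSet (E : V → V → Prop) (v : V) : Finset V :=
  Finset.univ.filter (fun w => rle E v w)

noncomputable def depthE (E : V → V → Prop) (v : V) : ℕ := (Anc E v).card - 1

def isCover (E : V → V → Prop) (a b : V) : Prop :=
  rlt E a b ∧ ∀ z, rlt E a z → rle E z b → z = b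

noncomputable def coversE (E : V → V → Prop) (v : V) : Finset V :=
  Finset.univ.filter (fun m => isCover E v m)

noncomputable def Dset (E : V → V → Prop) (v : V) : Finset ℕ :=
  (Finset.univ.filter (fun a => E a v)).image (depthE E)

section basic

variable {E : V → V → Prop}
  (hac : ∀ v, ¬ Relation.TransGen E v v)
  (hS : ∀ x y : V, ¬ rle E x y → ¬ rle E y x → ∀ v, ¬ (rle E x v ∧ rle E y v))

lemma rle_refl (a : V) : rle E a a := Relation.ReflTransGen.refl

lemma rle_trans {a b c : V} (h : rle E a b) (h' : rle E b c) : rle E a c :=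
  Relation.ReflTransGen.trans h h'

lemma rlt_transGen {a b : V} (h : rlt E a b) : Relation.TransGen E a b := by
  rcases h with ⟨h, hne⟩
  rcases (Relation.reflTransGen_iff_eq_or_transGen.mp h) with h | h
  · exact absurd h.symm hne
  · exact h

include hac in
lemma rle_antisymm {a b : V} (h : rle E a b) (h' : rle E b a) : a = b := by
  by_contra hne
  exact hac a ((rlt_transGen ⟨h, hne⟩).trans (rlt_transGen ⟨h', Ne.symm hne⟩))

include hS in
lemma rle_comparable {a b v : V} (h : rle E a v) (h' : rle E b v) :
    rle E a b ∨ rle E b a := by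
  by_contra hcon
  push_neg at hcon
  exact hS a b hcon.1 hcon.2 v ⟨h, h'⟩

include hac in
lemma E_rlt {a b : V} (h : E a b) : rlt E a b := by
  refine ⟨Relation.ReflTransGen.single h, ?_⟩
  rintro rfl
  exact hac a (Relation.TransGen.single h)

lemma transGen_head {a b : V} (h : Relation.TransGen E a b) :
    ∃ z, E a z ∧ rle E z b := by
  induction h with
  | single h => exact ⟨_, h, Relation.ReflTransGen.refl⟩
  | tail _ e ih =>
    obtain ⟨z, hz, hzb⟩ := ih
    exact ⟨z, hz, hzb.tail e⟩

include hac in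
lemma cover_E {a b : V} (h : isCover E a b) : E a b := by
  obtain ⟨z, hz, hzb⟩ := transGen_head (rlt_transGen h.1)
  have : z = b := h.2 z (E_rlt hac hz) hzb
  rwa [this] at hz

lemma mem_Anc {a v : V} : a ∈ Anc E v ↔ rle E a v := by
  simp [Anc]

lemma mem_upSet {a v : V} : a ∈ upSet E v ↔ rle E v a := by
  simp [upSet]

lemma self_mem_Anc (v : V) : v ∈ Anc E v := mem_Anc.mpr (rle_refl v)

lemma self_mem_upSet (v : V) : v ∈ upSet E v := mem_upSet.mpr (rle_refl v)

lemma Anc_card_pos (v : V) : 0 < (Anc E v).card :=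
  Finset.card_pos.mpr ⟨v, self_mem_Anc v⟩

lemma Anc_subset {a b : V} (h : rle E a b) : Anc E a ⊆ Anc E b := by
  intro z hz
  exact mem_Anc.mpr (rle_trans (mem_Anc.mp hz) h)

include hac in
lemma Anc_ssubset {a b : V} (h : rlt E a b) : Anc E a ⊂ Anc E b := by
  refine ⟨Anc_subset h.1, fun hsub => ?_⟩
  have : b ∈ Anc E a := hsub (self_mem_Anc b)
  exact h.2 (rle_antisymm hac h.1 (mem_Anc.mp this))

include hac in
lemma depth_lt {a b : V} (h : rlt E a b) : depthE E a < depthE E b := by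
  have h1 := Finset.card_lt_card (Anc_ssubset hac h)
  have h2 := Anc_card_pos (E := E) a
  unfold depthE
  omega

include hac hS in
lemma depth_inj {a b v : V} (ha : rle E a v) (hb : rle E b v)
    (hd : depthE E a = depthE E b) : a = b := by
  rcases rle_comparable hS ha hb with h | h
  · by_contra hne
    exact absurd hd (Nat.ne_of_lt (depth_lt hac ⟨h, hne⟩))
  · by_contra hne
    exact absurd hd.symm (Nat.ne_of_lt (depth_lt hac ⟨h, Ne.symm hne⟩))

lemma mem_coversE {x m : V} : m ∈ coversE E x ↔ isCover E x m := by
  simp [coversE]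

include hac hS in
lemma Anc_cover {x m : V} (h : isCover E x m) : Anc E m = insert m (Anc E x) := by
  ext a
  simp only [Finset.mem_insert, mem_Anc]
  constructor
  · intro ha
    by_cases hax : a = m
    · exact Or.inl hax
    · right
      rcases rle_comparable hS ha h.1.1 with h' | h'
      · -- rle a x
        exact h'
      · -- rle x a : then a between x and m
        by_cases hxa : x = a
        · exact hxa ▸ rle_refl x
        · exact absurd (h.2 a ⟨h', hxa⟩ ha) hax
  · rintro (rfl | ha)
    · exact rle_refl a
    · exact rle_trans ha h.1.1

include hac hS in
lemma depth_cover {x m : V} (h : isCover E x m) : depthE E m = depthE E x + 1 := by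
  have hm : m ∉ Anc E x := by
    intro hm
    exact h.1.2 (rle_antisymm hac h.1.1 (mem_Anc.mp hm))
  have := Anc_cover hac hS h
  have hcard : (Anc E m).card = (Anc E x).card + 1 := by
    rw [this, Finset.card_insert_of_notMem hm]
  have := Anc_card_pos (E := E) x
  unfold depthE
  omega

include hac in
lemma covers_eq_of_rle {x d d' : V} (hd : isCover E x d) (hd' : isCover E x d')
    (h : rle E d d') : d = d' := hd'.2 d hd.1 h

include hac hS in
lemma exists_cover_le {c w : V} (h : rlt E c w) : ∃ d, isCover E c d ∧ rle E d w := by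
  classical
  set S := (Anc E w).filter (fun z => rlt E c z) with hs
  have hw : w ∈ S := by simp [hs, mem_Anc, rle_refl, h]
  obtain ⟨m, hm, hmin⟩ := Finset.exists_min_image S (depthE E) ⟨w, hw⟩
  simp only [hs, Finset.mem_filter, mem_Anc] at hm
  refine ⟨m, ⟨hm.2, ?_⟩, hm.1⟩
  intro z hz hzm
  by_contra hne
  have hzS : z ∈ S := by
    simp only [hs, Finset.mem_filter, mem_Anc]
    exact ⟨rle_trans hzm hm.1, hz⟩
  have := hmin z hzS
  exact absurd this (Nat.not_le.mpr (depth_lt hac ⟨hzm, hne⟩))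

include hac hS in
lemma cover_unique_le {c d d' w : V} (hd : isCover E c d) (hd' : isCover E c d')
    (h : rle E d w) (h' : rle E d' w) : d = d' := by
  rcases rle_comparable hS h h' with hc | hc
  · exact covers_eq_of_rle hac hd hd' hc
  · exact (covers_eq_of_rle hac hd' hd hc).symm

include hac in
lemma upSet_card_lt {v m : V} (h : isCover E v m) :
    (upSet E m).card < (upSet E v).card := by
  apply Finset.card_lt_card
  constructor
  · intro z hz
    exact mem_upSet.mpr (rle_trans h.1.1 (mem_upSet.mp hz))
  · intro hsub
    have : v ∈ upSet E m := hsub (self_mem_upSet v)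
    exact h.1.2 (rle_antisymm hac h.1.1 (mem_upSet.mp this))

include hac hS in
lemma E_char {a b : V} : E a b ↔ rlt E a b ∧ depthE E a ∈ Dset E b := by
  constructor
  · intro h
    refine ⟨E_rlt hac h, ?_⟩
    simp only [Dset, Finset.mem_image, Finset.mem_filter, Finset.mem_univ, true_and]
    exact ⟨a, h, rfl⟩
  · rintro ⟨hlt, hd⟩
    simp only [Dset, Finset.mem_image, Finset.mem_filter, Finset.mem_univ, true_and] at hd
    obtain ⟨a', ha', hda⟩ := hd
    have : a' = a := depth_inj hac hS (Relation.ReflTransGen.single ha') hlt.1 hda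
    rwa [this] at ha'

include hac hS in
lemma exists_path_to (a : V) :
    ∃ f : ℕ → V, f (depthE E a) = a ∧ ∀ i < depthE E a, E (f i) (f (i + 1)) := by
  generalize hn : depthE E a = n
  induction n generalizing a with
  | zero => exact ⟨fun _ => a, rfl, by omega⟩
  | succ m ih =>
    -- find parent
    have hcard : 2 ≤ (Anc E a).card := by
      have := Anc_card_pos (E := E) a
      unfold depthE at hn; omega
    have hne : ((Anc E a).erase a).Nonempty := by
      rw [← Finset.card_pos, Finset.card_erase_of_mem (self_mem_Anc a)]
      omega
    obtain ⟨p, hp, hmax⟩ := Finset.exists_max_image _ (depthE E) hne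
    simp only [Finset.mem_erase, mem_Anc] at hp
    have hcov : isCover E p a := by
      refine ⟨⟨hp.2, hp.1⟩, ?_⟩
      intro z hz hza
      by_contra hzne
      have hzmem : z ∈ (Anc E a).erase a := by
        simp only [Finset.mem_erase, mem_Anc]
        exact ⟨hzne, hza⟩
      exact absurd (hmax z hzmem) (Nat.not_le.mpr (depth_lt hac hz))
    have hdp : depthE E p = m := by
      have := depth_cover hac hS hcov
      omega
    obtain ⟨f, hf0, hf⟩ := ih p hdp
    refine ⟨fun j => if j ≤ m then f j else a, by simp, ?_⟩
    intro j hj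
    by_cases h1 : j < m
    · simp only [if_pos (by omega : j ≤ m), if_pos (by omega : j + 1 ≤ m)]
      exact hf j h1
    · have hj' : j = m := by omega
      subst hj'
      simp only [if_pos le_rfl, if_neg (by omega : ¬ (j + 1 ≤ j))]
      rw [hf0]
      exact cover_E hac hcov

include hac hS in
lemma depth_le_N {N : ℕ} (hh : ∀ (n : ℕ) (f : ℕ → V), (∀ i < n, E (f i) (f (i + 1))) → n ≤ N)
    (a : V) : depthE E a ≤ N := by
  obtain ⟨f, _, hf⟩ := exists_path_to hac hS a
  exact hh _ f hf

end basic

inductive Code (F : Type) where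
  | mk : Multiset F → Finset ℕ → List (Code F) → Code F

/-- fueled type code -/
noncomputable def go (E : V → V → Prop) (label : V → Multiset F) : ℕ → V → Code F
  | 0, v => Code.mk (label v) (Dset E v) []
  | n + 1, v => Code.mk (label v) (Dset E v)
      (((coversE E v).val.map (go E label n)).toList)

noncomputable def τ (E : V → V → Prop) (label : V → Multiset F) (v : V) : Code F :=
  go E label ((upSet E v).card) v

section tau

variable {E : V → V → Prop} {label : V → Multiset F}
  (hac : ∀ v, ¬ Relation.TransGen E v v)

include hac in
lemma go_stab : ∀ n v, (upSet E v).card ≤ n →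
    go E label n v = go E label ((upSet E v).card) v := by
  intro n
  induction n using Nat.strong_induction_on with
  | _ n IH =>
    intro v hv
    have hpos : 0 < (upSet E v).card := Finset.card_pos.mpr ⟨v, self_mem_upSet v⟩
    obtain ⟨k, hk⟩ : ∃ k, (upSet E v).card = k + 1 := ⟨(upSet E v).card - 1, by omega⟩
    obtain ⟨n', hn'⟩ : ∃ n', n = n' + 1 := ⟨n - 1, by omega⟩
    subst hn'
    rw [hk]
    simp only [go, Code.mk.injEq, true_and]
    congr 1
    apply Multiset.map_congr rfl
    intro d hd
    have hcov : isCover E v d := mem_coversE.mp hd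
    have hlt := upSet_card_lt hac hcov
    rw [IH n' (by omega) d (by omega), IH k (by omega) d (by omega)]

include hac in
lemma tau_spec (v : V) :
    τ E label v = Code.mk (label v) (Dset E v)
      (((coversE E v).val.map (τ E label)).toList) := by
  have hpos : 0 < (upSet E v).card := Finset.card_pos.mpr ⟨v, self_mem_upSet v⟩
  obtain ⟨k, hk⟩ : ∃ k, (upSet E v).card = k + 1 := ⟨(upSet E v).card - 1, by omega⟩
  unfold τ
  rw [hk]
  simp only [go, Code.mk.injEq, true_and]
  congr 1
  apply Multiset.map_congr rfl
  intro d hd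
  have hcov : isCover E v d := mem_coversE.mp hd
  have hlt := upSet_card_lt hac hcov
  exact go_stab hac k d (by omega)

include hac in
lemma tau_label {v w : V} (h : τ E label v = τ E label w) : label v = label w := by
  rw [tau_spec hac v, tau_spec hac w] at h
  exact (Code.mk.injEq _ _ _ _ _ _).mp h |>.1

include hac in
lemma tau_Dset {v w : V} (h : τ E label v = τ E label w) : Dset E v = Dset E w := by
  rw [tau_spec hac v, tau_spec hac w] at h
  exact ((Code.mk.injEq _ _ _ _ _ _).mp h).2.1

include hac in
lemma tau_covers {v w : V} (h : τ E label v = τ E label w) :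
    (coversE E v).val.map (τ E label) = (coversE E w).val.map (τ E label) := by
  rw [tau_spec hac v, tau_spec hac w] at h
  have := ((Code.mk.injEq _ _ _ _ _ _).mp h).2.2
  calc (coversE E v).val.map (τ E label)
      = (((coversE E v).val.map (τ E label)).toList : Multiset (Code F)) :=
        (Multiset.coe_toList _).symm
    _ = (((coversE E w).val.map (τ E label)).toList : Multiset (Code F)) := by rw [this]
    _ = (coversE E w).val.map (τ E label) := Multiset.coe_toList _

end tau

/-- extract a type-preserving bijection from equality of mapped multisets -/
lemma exists_bijOn_of_map_eq {α β : Type} (f : α → β) :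
    ∀ (s t : Finset α), s.val.map f = t.val.map f →
      ∃ g : α → α, Set.BijOn g ↑s ↑t ∧ ∀ d ∈ s, f (g d) = f d := by
  classical
  intro s
  induction s using Finset.strongInductionOn with
  | _ s IH =>
    intro t h
    rcases s.eq_empty_or_nonempty with rfl | ⟨a, ha⟩
    · have : t = ∅ := by
        have := congrArg Multiset.card h
        simp only [Multiset.card_map, Finset.card_val] at this
        exact Finset.card_eq_zero.mp (by simpa using this.symm)
      subst this
      exact ⟨id, by simp [Set.BijOn], by simp⟩
    · have hfa : f a ∈ t.val.map f := by
        rw [← h]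
        exact Multiset.mem_map_of_mem f (by simpa using ha)
      obtain ⟨b, hb, hfb⟩ := Multiset.mem_map.mp hfa
      have hb' : b ∈ t := hb
      have hrec : (s.erase a).val.map f = (t.erase b).val.map f := by
        have hs : s.val = a ::ₘ (s.erase a).val := by
          rw [Finset.erase_val, Multiset.cons_erase (by simpa using ha)]
        have ht : t.val = b ::ₘ (t.erase b).val := by
          rw [Finset.erase_val, Multiset.cons_erase (by simpa using hb')]
        rw [hs, ht] at h
        simp only [Multiset.map_cons] at h
        rw [hfb] at h
        exact (Multiset.cons_inj_right _).mp h
      obtain ⟨g', hg', hfg'⟩ := IH (s.erase a) (Finset.erase_ssubset ha) (t.erase b) hrec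
      refine ⟨fun x => if x = a then b else g' x, ?_, ?_⟩
      · constructor
        · intro x hx
          have hxs : x ∈ s := hx
          by_cases hxa : x = a
          · simp [hxa, hb']
          · simp only [if_neg hxa, Finset.mem_coe]
            have : g' x ∈ t.erase b := hg'.1 (by simp [Finset.mem_erase, hxa, hxs])
            exact Finset.mem_of_mem_erase this
        constructor
        · intro x hx y hy hxy
          by_cases hxa : x = a <;> by_cases hya : y = a
          · rw [hxa, hya]
          · exfalso
            simp only [if_pos hxa, if_neg hya] at hxy
            have : g' y ∈ t.erase b := hg'.1 (by simp [Finset.mem_erase, hya, hy])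
            rw [← hxy] at this
            exact (Finset.notMem_erase b t) this
          · exfalso
            simp only [if_neg hxa, if_pos hya] at hxy
            have : g' x ∈ t.erase b := hg'.1 (by simp [Finset.mem_erase, hxa, hx])
            rw [hxy] at this
            exact (Finset.notMem_erase b t) this
          · simp only [if_neg hxa, if_neg hya] at hxy
            exact hg'.2.1 (by simp [Finset.mem_erase, hxa, hx]) (by simp [Finset.mem_erase, hya, hy]) hxy
        · intro y hy
          simp only [Finset.mem_coe] at hy
          by_cases hyb : y = b
          · exact ⟨a, by simpa using ha, by simp [hyb]⟩
          · obtain ⟨x, hx, hgx⟩ := hg'.2.2 (by simp [Finset.mem_erase, hyb, hy] : y ∈ (t.erase b : Finset α))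
            have hx' : x ∈ s.erase a := hx
            have hxa : x ≠ a := (Finset.mem_erase.mp hx').1
            exact ⟨x, Finset.mem_coe.mpr (Finset.mem_of_mem_erase hx'), by simp [hxa, hgx]⟩
      · intro d hd
        by_cases hda : d = a
        · simp [hda, hfb]
        · simp only [if_neg hda]
          exact hfg' d (Finset.mem_erase.mpr ⟨hda, hd⟩)

noncomputable def covOf (E : V → V → Prop) (c w : V) : V :=
  if h : ∃ d, isCover E c d ∧ rle E d w then h.choose else c

section iso

variable {E : V → V → Prop} {label : V → Multiset F}
  (hac : ∀ v, ¬ Relation.TransGen E v v)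
  (hS : ∀ x y : V, ¬ rle E x y → ¬ rle E y x → ∀ v, ¬ (rle E x v ∧ rle E y v))

include hac hS in
lemma covOf_eq {c d w : V} (hd : isCover E c d) (hw : rle E d w) : covOf E c w = d := by
  have h : ∃ d, isCover E c d ∧ rle E d w := ⟨d, hd, hw⟩
  rw [covOf, dif_pos h]
  exact cover_unique_le hac hS h.choose_spec.1 hd h.choose_spec.2 hw

include hac hS in
lemma iso_exists : ∀ n (c c' : V), (upSet E c).card ≤ n →
    τ E label c = τ E label c' → depthE E c = depthE E c' →
    ∃ φ ψ : V → V, φ c = c' ∧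
      (∀ v, rle E c v → rle E c' (φ v) ∧ ψ (φ v) = v ∧ label (φ v) = label v ∧
        Dset E (φ v) = Dset E v ∧ depthE E (φ v) = depthE E v) ∧
      (∀ v, rle E c' v → rle E c (ψ v) ∧ φ (ψ v) = v) ∧
      (∀ v w, rle E c v → rle E c w → (rle E v w ↔ rle E (φ v) (φ w))) := by
  intro n
  induction n using Nat.strong_induction_on with
  | _ n IH =>
    intro c c' hn hτ hdep
    have hcovmap := tau_covers hac hτ
    obtain ⟨g, hgbij, hgτ⟩ :=
      exists_bijOn_of_map_eq (τ E label) (coversE E c) (coversE E c') hcovmap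
    have H : ∀ d : V, ∃ p : (V → V) × (V → V), d ∈ coversE E c →
        (p.1 d = g d ∧
         (∀ v, rle E d v → rle E (g d) (p.1 v) ∧ p.2 (p.1 v) = v ∧ label (p.1 v) = label v ∧
            Dset E (p.1 v) = Dset E v ∧ depthE E (p.1 v) = depthE E v) ∧
         (∀ v, rle E (g d) v → rle E d (p.2 v) ∧ p.1 (p.2 v) = v) ∧
         (∀ v w, rle E d v → rle E d w → (rle E v w ↔ rle E (p.1 v) (p.1 w)))) := by
      intro d
      by_cases hd : d ∈ coversE E c
      · have hdc : isCover E c d := mem_coversE.mp hd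
        have hgd : isCover E c' (g d) := mem_coversE.mp (hgbij.1 hd)
        have hτd : τ E label d = τ E label (g d) := (hgτ d hd).symm
        have hdd : depthE E d = depthE E (g d) := by
          rw [depth_cover hac hS hdc, depth_cover hac hS hgd, hdep]
        obtain ⟨φ, ψ, hφc, h1, h2, h3⟩ := IH ((upSet E d).card)
          (lt_of_lt_of_le (upSet_card_lt hac hdc) hn) d (g d) le_rfl hτd hdd
        exact ⟨(φ, ψ), fun _ => ⟨hφc, h1, h2, h3⟩⟩
      · exact ⟨(id, id), fun h => absurd h hd⟩
    choose Φ hΦ using H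
    classical
    set gpre : V → V := fun d' => if h : ∃ d, d ∈ coversE E c ∧ g d = d' then h.choose else d'
      with hgpre
    have gpre_g : ∀ d ∈ coversE E c, gpre (g d) = d := by
      intro d hd
      have h : ∃ d₂, d₂ ∈ coversE E c ∧ g d₂ = g d := ⟨d, hd, rfl⟩
      simp only [hgpre, dif_pos h]
      exact hgbij.2.1 (h.choose_spec.1) hd (h.choose_spec.2)
    have gpre_spec : ∀ d' ∈ coversE E c', gpre d' ∈ coversE E c ∧ g (gpre d') = d' := by
      intro d' hd'
      obtain ⟨d, hd, hgd⟩ := hgbij.2.2 hd'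
      have hd'' : d ∈ coversE E c := hd
      rw [← hgd, gpre_g d hd'']
      exact ⟨hd'', rfl⟩
    set φ : V → V := fun w => if w = c then c' else (Φ (covOf E c w)).1 w with hφ
    set ψ : V → V := fun w => if w = c' then c else (Φ (gpre (covOf E c' w))).2 w with hψ
    -- key computation rules
    have hφkey : ∀ d, isCover E c d → ∀ v, rle E d v → φ v = (Φ d).1 v := by
      intro d hd v hv
      have hvc : v ≠ c := by
        rintro rfl
        exact hd.1.2 (rle_antisymm hac hd.1.1 hv)
      simp only [hφ, if_neg hvc, covOf_eq hac hS hd hv]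
    have hψkey : ∀ d, d ∈ coversE E c → ∀ v, rle E (g d) v → ψ v = (Φ d).2 v := by
      intro d hd v hv
      have hgd : isCover E c' (g d) := mem_coversE.mp (hgbij.1 hd)
      have hvc : v ≠ c' := by
        rintro rfl
        exact hgd.1.2 (rle_antisymm hac hgd.1.1 hv)
      simp only [hψ, if_neg hvc, covOf_eq hac hS hgd hv, gpre_g d hd]
    refine ⟨φ, ψ, by simp [hφ], ?_, ?_, ?_⟩
    · -- forward bundle
      intro v hv
      by_cases hvc : v = c
      · have hφv : φ v = c' := by simp [hφ, hvc]
        rw [hφv]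
        refine ⟨rle_refl c', by simp [hψ, hvc], ?_, ?_, ?_⟩
        · rw [hvc]; exact (tau_label hac hτ).symm
        · rw [hvc]; exact (tau_Dset hac hτ).symm
        · rw [hvc]; exact hdep.symm
      · obtain ⟨d, hd, hdv⟩ := exists_cover_le hac hS ⟨hv, Ne.symm hvc⟩
        have hdmem : d ∈ coversE E c := mem_coversE.mpr hd
        have hgd : isCover E c' (g d) := mem_coversE.mp (hgbij.1 hdmem)
        have hrw : φ v = (Φ d).1 v := hφkey d hd v hdv
        obtain ⟨hb0, hb1, hb2, hb3⟩ := hΦ d hdmem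
        obtain ⟨hr1, hr2, hr3, hr4, hr5⟩ := hb1 v hdv
        refine ⟨?_, ?_, ?_, ?_, ?_⟩
        · rw [hrw]; exact rle_trans hgd.1.1 hr1
        · rw [hrw, hψkey d hdmem _ hr1]; exact hr2
        · rw [hrw]; exact hr3
        · rw [hrw]; exact hr4
        · rw [hrw]; exact hr5
    · -- reverse bundle
      intro v hv
      by_cases hvc : v = c'
      · have hψv : ψ v = c := by simp [hψ, hvc]
        rw [hψv]
        refine ⟨rle_refl c, ?_⟩
        rw [hvc]
        simp [hφ]

      · obtain ⟨d', hd', hdv⟩ := exists_cover_le hac hS ⟨hv, Ne.symm hvc⟩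
        have hd'mem : d' ∈ coversE E c' := mem_coversE.mpr hd'
        obtain ⟨hdmem, hgd⟩ := gpre_spec d' hd'mem
        set d := gpre d'
        have hdc : isCover E c d := mem_coversE.mp hdmem
        have hrw : ψ v = (Φ d).2 v := by
          apply hψkey d hdmem v
          rw [hgd]; exact hdv
        obtain ⟨hb0, hb1, hb2, hb3⟩ := hΦ d hdmem
        have hgdv : rle E (g d) v := by rw [hgd]; exact hdv
        obtain ⟨hs1, hs2⟩ := hb2 v hgdv
        refine ⟨?_, ?_⟩
        · rw [hrw]; exact rle_trans hdc.1.1 hs1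
        · rw [hrw, hφkey d hdc _ hs1]; exact hs2
    · -- order iso
      intro v w hv hw
      by_cases hvc : v = c
      · have hφv : φ v = c' := by simp [hφ, hvc]
        constructor
        · intro _
          rw [hφv]
          by_cases hwc : w = c
          · have hφw : φ w = c' := by simp [hφ, hwc]
            rw [hφw]
            exact rle_refl c'
          · obtain ⟨d, hd, hdw⟩ := exists_cover_le hac hS ⟨hw, Ne.symm hwc⟩
            have hdmem : d ∈ coversE E c := mem_coversE.mpr hd
            have hgd : isCover E c' (g d) := mem_coversE.mp (hgbij.1 hdmem)
            rw [hφkey d hd w hdw]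
            exact rle_trans hgd.1.1 ((hΦ d hdmem).2.1 w hdw).1
        · intro _; rw [hvc]; exact hw
      · by_cases hwc : w = c
        · have hφw : φ w = c' := by simp [hφ, hwc]
          constructor
          · intro hvw
            exact absurd (rle_antisymm hac (hwc ▸ hvw : rle E v c) hv) hvc
          · intro hvw
            exfalso
            rw [hφw] at hvw
            obtain ⟨d, hd, hdv⟩ := exists_cover_le hac hS ⟨hv, Ne.symm hvc⟩
            have hdmem : d ∈ coversE E c := mem_coversE.mpr hd
            have hgd : isCover E c' (g d) := mem_coversE.mp (hgbij.1 hdmem)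
            have h1 : rle E c' (φ v) := by
              rw [hφkey d hd v hdv]
              exact rle_trans hgd.1.1 ((hΦ d hdmem).2.1 v hdv).1
            have : φ v = c' := rle_antisymm hac hvw h1
            have h2 : rle E (g d) c' := by
              rw [← this, hφkey d hd v hdv]
              exact ((hΦ d hdmem).2.1 v hdv).1
            exact hgd.1.2 (rle_antisymm hac hgd.1.1 h2)
        · obtain ⟨dv, hdv, hdvle⟩ := exists_cover_le hac hS ⟨hv, Ne.symm hvc⟩
          obtain ⟨dw, hdw, hdwle⟩ := exists_cover_le hac hS ⟨hw, Ne.symm hwc⟩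
          have hdvmem : dv ∈ coversE E c := mem_coversE.mpr hdv
          have hdwmem : dw ∈ coversE E c := mem_coversE.mpr hdw
          by_cases hdd : dv = dw
          · subst hdd
            rw [hφkey dv hdv v hdvle, hφkey dv hdv w hdwle]
            exact (hΦ dv hdvmem).2.2.2 v w hdvle hdwle
          · constructor
            · intro hvw
              exfalso
              exact hdd (cover_unique_le hac hS hdv hdw (rle_trans hdvle hvw) hdwle)
            · intro hvw
              exfalso
              have hgdv : isCover E c' (g dv) := mem_coversE.mp (hgbij.1 hdvmem)
              have hgdw : isCover E c' (g dw) := mem_coversE.mp (hgbij.1 hdwmem)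
              have h1 : rle E (g dv) (φ v) := by
                rw [hφkey dv hdv v hdvle]; exact ((hΦ dv hdvmem).2.1 v hdvle).1
              have h2 : rle E (g dw) (φ w) := by
                rw [hφkey dw hdw w hdwle]; exact ((hΦ dw hdwmem).2.1 w hdwle).1
              have : g dv = g dw :=
                cover_unique_le hac hS hgdv hgdw (rle_trans h1 hvw) h2
              exact hdd (hgbij.2.1 hdvmem hdwmem this)

end iso

section fiber

variable {E : V → V → Prop} {label : V → Multiset F}
  (hac : ∀ v, ¬ Relation.TransGen E v v)
  (hS : ∀ x y : V, ¬ rle E x y → ¬ rle E y x → ∀ v, ¬ (rle E x v ∧ rle E y v))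
  (h2 : ∀ (x : V) (c : Fin 3 → V), (∀ i, E x (c i)) → Function.Injective c →
          ∀ π : V ≃ V, (∀ a b, E a b ↔ E (π a) (π b)) →
            (∀ v, label (π v) = label v) →
            (∀ v, (∀ i, ¬ Relation.ReflTransGen E (c i) v) → π v = v) →
            π = Equiv.refl V)

include hac hS h2 in
lemma fiber_le_two (x : V) (a : Code F) :
    ((coversE E x).filter (fun d => τ E label d = a)).card ≤ 2 := by
  by_contra hcon
  push_neg at hcon
  set S := (coversE E x).filter (fun d => τ E label d = a) with hs
  have h3 : 3 ≤ S.card := hcon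
  obtain ⟨c0, hc0⟩ := Finset.card_pos.mp (by omega : 0 < S.card)
  have h1pos : 0 < (S.erase c0).card := by
    rw [Finset.card_erase_of_mem hc0]; omega
  obtain ⟨c1, hc1⟩ := Finset.card_pos.mp h1pos
  have h2pos : 0 < ((S.erase c0).erase c1).card := by
    rw [Finset.card_erase_of_mem hc1, Finset.card_erase_of_mem hc0]; omega
  obtain ⟨c2, hc2⟩ := Finset.card_pos.mp h2pos
  have hne01 : c1 ≠ c0 := (Finset.mem_erase.mp hc1).1
  have hc1S : c1 ∈ S := Finset.mem_of_mem_erase hc1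
  have hne21 : c2 ≠ c1 := (Finset.mem_erase.mp hc2).1
  have hc2e : c2 ∈ S.erase c0 := Finset.mem_of_mem_erase hc2
  have hne20 : c2 ≠ c0 := (Finset.mem_erase.mp hc2e).1
  have hc2S : c2 ∈ S := Finset.mem_of_mem_erase hc2e
  have hmem : ∀ d ∈ S, isCover E x d ∧ τ E label d = a := by
    intro d hd
    rw [hs, Finset.mem_filter] at hd
    exact ⟨mem_coversE.mp hd.1, hd.2⟩
  obtain ⟨hcov0, hτ0⟩ := hmem c0 hc0
  obtain ⟨hcov1, hτ1⟩ := hmem c1 hc1S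
  obtain ⟨hcov2, hτ2⟩ := hmem c2 hc2S
  have hτ01 : τ E label c0 = τ E label c1 := by rw [hτ0, hτ1]
  have hdep01 : depthE E c0 = depthE E c1 := by
    rw [depth_cover hac hS hcov0, depth_cover hac hS hcov1]
  obtain ⟨φ, ψ, hφc, hfwd, hrev, hord⟩ :=
    iso_exists hac hS ((upSet E c0).card) c0 c1 le_rfl hτ01 hdep01
  -- disjointness of the two upward closures
  have hdisj : ∀ v, rle E c0 v → rle E c1 v → False := by
    intro v h0 h1
    rcases rle_comparable hS h0 h1 with h | h
    · exact (Ne.symm hne01) (covers_eq_of_rle hac hcov0 hcov1 h)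
    · exact hne01 (covers_eq_of_rle hac hcov1 hcov0 h)
  set π0 : V → V := fun v =>
    if rle E c0 v then φ v else if rle E c1 v then ψ v else v with hπ0
  have hπφ : ∀ v, rle E c0 v → π0 v = φ v := by
    intro v hv; simp [hπ0, if_pos hv]
  have hπψ : ∀ v, rle E c1 v → π0 v = ψ v := by
    intro v hv
    have : ¬ rle E c0 v := fun h => hdisj v h hv
    simp [hπ0, if_neg this, if_pos hv]
  have hπid : ∀ v, ¬ rle E c0 v → ¬ rle E c1 v → π0 v = v := by
    intro v h0 h1; simp [hπ0, if_neg h0, if_neg h1]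
  have hinv : Function.Involutive π0 := by
    intro v
    by_cases h0 : rle E c0 v
    · rw [hπφ v h0]
      obtain ⟨hf1, hf2, _, _, _⟩ := hfwd v h0
      rw [hπψ (φ v) hf1, hf2]
    · by_cases h1 : rle E c1 v
      · rw [hπψ v h1]
        obtain ⟨hr1, hr2⟩ := hrev v h1
        rw [hπφ (ψ v) hr1, hr2]
      · rw [hπid v h0 h1, hπid v h0 h1]
  -- pointwise invariants
  have hlab : ∀ v, label (π0 v) = label v := by
    intro v
    by_cases h0 : rle E c0 v
    · rw [hπφ v h0]; exact (hfwd v h0).2.2.1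
    · by_cases h1 : rle E c1 v
      · rw [hπψ v h1]
        obtain ⟨hr1, hr2⟩ := hrev v h1
        have := (hfwd (ψ v) hr1).2.2.1
        rw [hr2] at this
        exact this.symm
      · rw [hπid v h0 h1]
  have hDs : ∀ v, Dset E (π0 v) = Dset E v := by
    intro v
    by_cases h0 : rle E c0 v
    · rw [hπφ v h0]; exact (hfwd v h0).2.2.2.1
    · by_cases h1 : rle E c1 v
      · rw [hπψ v h1]
        obtain ⟨hr1, hr2⟩ := hrev v h1
        have := (hfwd (ψ v) hr1).2.2.2.1
        rw [hr2] at this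
        exact this.symm
      · rw [hπid v h0 h1]
  have hdp : ∀ v, depthE E (π0 v) = depthE E v := by
    intro v
    by_cases h0 : rle E c0 v
    · rw [hπφ v h0]; exact (hfwd v h0).2.2.2.2
    · by_cases h1 : rle E c1 v
      · rw [hπψ v h1]
        obtain ⟨hr1, hr2⟩ := hrev v h1
        have := (hfwd (ψ v) hr1).2.2.2.2
        rw [hr2] at this
        exact this.symm
      · rw [hπid v h0 h1]
  -- rle preservation (one direction suffices thanks to involutivity)
  have hanc0 : ∀ v, ¬ rle E c0 v → ∀ b, rle E c0 b → rle E v b → rle E v x := by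
    intro v hnv b hb hvb
    rcases rle_comparable hS hvb hb with h | h
    · have hvne : v ≠ c0 := by rintro rfl; exact hnv (rle_refl v)
      have : v ∈ Anc E c0 := mem_Anc.mpr h
      rw [Anc_cover hac hS hcov0] at this
      rcases Finset.mem_insert.mp this with h' | h'
      · exact absurd h' hvne
      · exact mem_Anc.mp h'
    · exact absurd h hnv
  have hanc1 : ∀ v, ¬ rle E c1 v → ∀ b, rle E c1 b → rle E v b → rle E v x := by
    intro v hnv b hb hvb
    rcases rle_comparable hS hvb hb with h | h
    · have hvne : v ≠ c1 := by rintro rfl; exact hnv (rle_refl v)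
      have : v ∈ Anc E c1 := mem_Anc.mpr h
      rw [Anc_cover hac hS hcov1] at this
      rcases Finset.mem_insert.mp this with h' | h'
      · exact absurd h' hvne
      · exact mem_Anc.mp h'
    · exact absurd h hnv
  have hrle : ∀ v w, rle E v w → rle E (π0 v) (π0 w) := by
    intro v w hvw
    by_cases h0 : rle E c0 v
    · have h0w : rle E c0 w := rle_trans h0 hvw
      rw [hπφ v h0, hπφ w h0w]
      exact (hord v w h0 h0w).mp hvw
    · by_cases h1 : rle E c1 v
      · have h1w : rle E c1 w := rle_trans h1 hvw
        rw [hπψ v h1, hπψ w h1w]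
        obtain ⟨hrv1, hrv2⟩ := hrev v h1
        obtain ⟨hrw1, hrw2⟩ := hrev w h1w
        have := hord (ψ v) (ψ w) hrv1 hrw1
        rw [hrv2, hrw2] at this
        exact this.mpr hvw
      · rw [hπid v h0 h1]
        by_cases hw0 : rle E c0 w
        · rw [hπφ w hw0]
          have hvx : rle E v x := hanc0 v h0 w hw0 hvw
          have : rle E c1 (φ w) := (hfwd w hw0).1
          exact rle_trans (rle_trans hvx hcov1.1.1) this
        · by_cases hw1 : rle E c1 w
          · rw [hπψ w hw1]
            have hvx : rle E v x := hanc1 v h1 w hw1 hvw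
            have : rle E c0 (ψ w) := (hrev w hw1).1
            exact rle_trans (rle_trans hvx hcov0.1.1) this
          · rw [hπid w hw0 hw1]
            exact hvw
  have hπinj : Function.Injective π0 := hinv.injective
  have hrleiff : ∀ v w, rle E v w ↔ rle E (π0 v) (π0 w) := by
    intro v w
    constructor
    · exact hrle v w
    · intro h
      have := hrle (π0 v) (π0 w) h
      rwa [hinv v, hinv w] at this
  have hEiff : ∀ v w, E v w ↔ E (π0 v) (π0 w) := by
    intro v w
    rw [E_char hac hS, E_char hac hS (a := π0 v), hdp v, hDs w]
    unfold rlt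
    rw [← hrleiff v w]
    constructor
    · rintro ⟨⟨h1, h2⟩, h3⟩
      exact ⟨⟨h1, fun he => h2 (hπinj he)⟩, h3⟩
    · rintro ⟨⟨h1, h2⟩, h3⟩
      refine ⟨⟨h1, ?_⟩, h3⟩
      rintro rfl
      exact h2 rfl
  have hEx : ∀ i, E x (![c0, c1, c2] i) := by
    intro i
    fin_cases i
    · exact cover_E hac hcov0
    · exact cover_E hac hcov1
    · exact cover_E hac hcov2
  have hcinj : Function.Injective (![c0, c1, c2] : Fin 3 → V) := by
    intro i j hij
    fin_cases i <;> fin_cases j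
    · rfl
    · exact absurd (show c0 = c1 from hij) (Ne.symm hne01)
    · exact absurd (show c0 = c2 from hij) (Ne.symm hne20)
    · exact absurd (show c1 = c0 from hij) hne01
    · rfl
    · exact absurd (show c1 = c2 from hij) (Ne.symm hne21)
    · exact absurd (show c2 = c0 from hij) hne20
    · exact absurd (show c2 = c1 from hij) hne21
    · rfl
  have hπ := h2 x ![c0, c1, c2] hEx hcinj hinv.toPerm
    (by intro v w
        simpa [Function.Involutive.coe_toPerm] using hEiff v w)
    (by intro v
        simpa [Function.Involutive.coe_toPerm] using hlab v)
    (by intro v hv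
        have h0 : ¬ rle E c0 v := by simpa [rle] using hv 0
        have h1 : ¬ rle E c1 v := by simpa [rle] using hv 1
        simpa [Function.Involutive.coe_toPerm] using hπid v h0 h1)
  have : π0 c0 = c0 := by
    have := congrArg (fun e => e c0) hπ
    simpa [Function.Involutive.coe_toPerm] using this
  rw [hπφ c0 (rle_refl c0), hφc] at this
  exact hne01 this

end fiber

noncomputable def labelsF (Ω : Finset F) : Finset (Multiset F) :=
  (Ω.val + Ω.val).powerset.toFinset

noncomputable def DF (N : ℕ) : Finset (Finset ℕ) := (Finset.range (N + 1)).powerset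

noncomputable def CodeS (Ω : Finset F) (N : ℕ) : ℕ → Finset (Code F)
  | 0 => (labelsF Ω ×ˢ DF N).image (fun p => Code.mk p.1 p.2 [])
  | h + 1 =>
      ((labelsF Ω ×ˢ DF N) ×ˢ (((CodeS Ω N h).val + (CodeS Ω N h).val).powerset.toFinset)).image
        (fun p => Code.mk p.1.1 p.1.2 p.2.toList)

def Tfun (N k : ℕ) : ℕ → ℕ
  | 0 => 2 ^ (2 * k) * 2 ^ (N + 1)
  | h + 1 => 2 ^ (2 * k) * 2 ^ (N + 1) * 2 ^ (2 * Tfun N k h)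

def sfun (N k : ℕ) : ℕ → ℕ
  | 0 => 1
  | h + 1 => 1 + 2 * Tfun N k h * sfun N k h

lemma labelsF_card (Ω : Finset F) : (labelsF Ω).card ≤ 2 ^ (2 * Ω.card) := by
  have h1 := Multiset.toFinset_card_le (Ω.val + Ω.val).powerset
  have h2 : Multiset.card (Ω.val + Ω.val).powerset = 2 ^ (2 * Ω.card) := by
    rw [Multiset.card_powerset, Multiset.card_add]
    have : Multiset.card Ω.val = Ω.card := rfl
    rw [this]
    ring_nf
  rw [labelsF]
  omega

lemma DF_card (N : ℕ) : (DF N).card = 2 ^ (N + 1) := by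
  rw [DF, Finset.card_powerset, Finset.card_range]

lemma CodeS_card (Ω : Finset F) (N : ℕ) : ∀ h, (CodeS Ω N h).card ≤ Tfun N Ω.card h := by
  intro h
  induction h with
  | zero =>
    calc (CodeS Ω N 0).card ≤ (labelsF Ω ×ˢ DF N).card := Finset.card_image_le
      _ = (labelsF Ω).card * (DF N).card := Finset.card_product _ _
      _ ≤ 2 ^ (2 * Ω.card) * 2 ^ (N + 1) :=
          Nat.mul_le_mul (labelsF_card Ω) (le_of_eq (DF_card N))
      _ = Tfun N Ω.card 0 := rfl
  | succ h ih =>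
    have hpow : (((CodeS Ω N h).val + (CodeS Ω N h).val).powerset.toFinset).card ≤
        2 ^ (2 * Tfun N Ω.card h) := by
      have h1 := Multiset.toFinset_card_le ((CodeS Ω N h).val + (CodeS Ω N h).val).powerset
      have h2 : Multiset.card ((CodeS Ω N h).val + (CodeS Ω N h).val).powerset =
          2 ^ (2 * (CodeS Ω N h).card) := by
        rw [Multiset.card_powerset, Multiset.card_add]
        have : Multiset.card (CodeS Ω N h).val = (CodeS Ω N h).card := rfl
        rw [this]
        ring_nf
      have h3 : (2:ℕ) ^ (2 * (CodeS Ω N h).card) ≤ 2 ^ (2 * Tfun N Ω.card h) :=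
        Nat.pow_le_pow_right (by norm_num) (by omega)
      omega
    calc (CodeS Ω N (h+1)).card
        ≤ (((labelsF Ω ×ˢ DF N) ×ˢ
            (((CodeS Ω N h).val + (CodeS Ω N h).val).powerset.toFinset))).card :=
          Finset.card_image_le
      _ = (labelsF Ω ×ˢ DF N).card *
            (((CodeS Ω N h).val + (CodeS Ω N h).val).powerset.toFinset).card :=
          Finset.card_product _ _
      _ = (labelsF Ω).card * (DF N).card *
            (((CodeS Ω N h).val + (CodeS Ω N h).val).powerset.toFinset).card := by
          rw [Finset.card_product]
      _ ≤ 2 ^ (2 * Ω.card) * 2 ^ (N + 1) * 2 ^ (2 * Tfun N Ω.card h) := by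
          exact Nat.mul_le_mul (Nat.mul_le_mul (labelsF_card Ω) (le_of_eq (DF_card N))) hpow
      _ = Tfun N Ω.card (h+1) := rfl

/-- chains from `v` have length at most `h` -/
def hb (E : V → V → Prop) (h : ℕ) (v : V) : Prop :=
  ∀ (n : ℕ) (f : ℕ → V), f 0 = v → (∀ i < n, E (f i) (f (i + 1))) → n ≤ h

section main

variable {E : V → V → Prop} {label : V → Multiset F} {Ω : Finset F} {N : ℕ}
  (hac : ∀ v, ¬ Relation.TransGen E v v)
  (hS : ∀ x y : V, ¬ rle E x y → ¬ rle E y x → ∀ v, ¬ (rle E x v ∧ rle E y v))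
  (hh : ∀ (n : ℕ) (f : ℕ → V), (∀ i < n, E (f i) (f (i + 1))) → n ≤ N)
  (hl1 : ∀ v A, A ∈ label v → A ∈ Ω)
  (hl2 : ∀ v A, (label v).count A ≤ 2)
  (h2 : ∀ (x : V) (c : Fin 3 → V), (∀ i, E x (c i)) → Function.Injective c →
          ∀ π : V ≃ V, (∀ a b, E a b ↔ E (π a) (π b)) →
            (∀ v, label (π v) = label v) →
            (∀ v, (∀ i, ¬ Relation.ReflTransGen E (c i) v) → π v = v) →
            π = Equiv.refl V)

include hac in
lemma hb_cover {h : ℕ} {v m : V} (hbv : hb E (h + 1) v) (hm : isCover E v m) :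
    hb E h m := by
  intro n f hf0 hf
  have := hbv (n + 1) (fun i => if i = 0 then v else f (i - 1)) (by simp) ?_
  · omega
  · intro i hi
    by_cases hi0 : i = 0
    · subst hi0
      simpa [hf0] using cover_E hac hm
    · have h1 : ¬ (i + 1 = 0) := by omega
      simp only [if_neg hi0, if_neg h1]
      have : i - 1 < n := by omega
      have := hf (i - 1) this
      have heq : i - 1 + 1 = i := by omega
      rwa [heq] at this

include hac hl1 hl2 in
lemma label_mem : ∀ v, label v ∈ labelsF Ω := by
  intro v
  rw [labelsF, Multiset.mem_toFinset, Multiset.mem_powerset, Multiset.le_iff_count]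
  intro A
  by_cases hA : A ∈ Ω
  · have : Multiset.count A (Ω.val + Ω.val) = 2 := by
      rw [Multiset.count_add, Multiset.count_eq_one_of_mem Ω.nodup hA]
    rw [this]
    exact hl2 v A
  · have : (label v).count A = 0 := by
      rw [Multiset.count_eq_zero]
      intro hmem
      exact hA (hl1 v A hmem)
    simp [this]

include hac hS hh in
lemma Dset_mem : ∀ v, Dset E v ∈ DF N := by
  intro v
  rw [DF, Finset.mem_powerset]
  intro j hj
  simp only [Dset, Finset.mem_image, Finset.mem_filter, Finset.mem_univ, true_and] at hj
  obtain ⟨a, _, rfl⟩ := hj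
  rw [Finset.mem_range]
  have := depth_le_N hac hS hh a
  omega

include hac hS hh hl1 hl2 h2 in
lemma main_bound : ∀ h v, hb E h v →
    (upSet E v).card ≤ sfun N Ω.card h ∧ τ E label v ∈ CodeS Ω N h := by
  intro h
  induction h with
  | zero =>
    intro v hbv
    have hcov : coversE E v = ∅ := by
      by_contra hne
      obtain ⟨m, hm⟩ := Finset.nonempty_of_ne_empty hne
      have hEm : E v m := cover_E hac (mem_coversE.mp hm)
      have := hbv 1 (fun i => if i = 0 then v else m) (by simp)
        (by intro i hi
            have : i = 0 := by omega
            subst this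
            simpa using hEm)
      omega
    constructor
    · have hsub : upSet E v ⊆ {v} := by
        intro w hw
        rw [Finset.mem_singleton]
        by_contra hne
        obtain ⟨d, hd, _⟩ := exists_cover_le hac hS ⟨mem_upSet.mp hw, fun h => hne h.symm⟩
        have : d ∈ coversE E v := mem_coversE.mpr hd
        rw [hcov] at this
        exact absurd this (Finset.notMem_empty d)
      calc (upSet E v).card ≤ ({v} : Finset V).card := Finset.card_le_card hsub
        _ = 1 := Finset.card_singleton v
    · rw [tau_spec hac v, hcov]
      simp only [CodeS, Finset.mem_image]
      refine ⟨(label v, Dset E v), ?_, ?_⟩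
      · rw [Finset.mem_product]
        exact ⟨label_mem hac hl1 hl2 v, Dset_mem hac hS hh v⟩
      · simp [Multiset.toList_zero]
  | succ h ih =>
    intro v hbv
    have IHd : ∀ d ∈ coversE E v,
        (upSet E d).card ≤ sfun N Ω.card h ∧ τ E label d ∈ CodeS Ω N h := by
      intro d hd
      exact ih d (hb_cover hac hbv (mem_coversE.mp hd))
    have hfiber : ∀ a ∈ (coversE E v).image (τ E label),
        ((coversE E v).filter (fun d => τ E label d = a)).card ≤ 2 := by
      intro a _
      exact fiber_le_two hac hS h2 v a
    have hcovcard : (coversE E v).card ≤ 2 * (CodeS Ω N h).card := by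
      have h1 := Finset.card_le_mul_card_image (coversE E v) 2 hfiber
      have h2' : (coversE E v).image (τ E label) ⊆ CodeS Ω N h := by
        intro a ha
        obtain ⟨d, hd, rfl⟩ := Finset.mem_image.mp ha
        exact (IHd d hd).2
      have := Finset.card_le_card h2'
      calc (coversE E v).card ≤ 2 * ((coversE E v).image (τ E label)).card := h1
        _ ≤ 2 * (CodeS Ω N h).card := by omega
    constructor
    · have hsub : upSet E v ⊆ insert v ((coversE E v).biUnion (upSet E)) := by
        intro w hw
        rw [Finset.mem_insert]
        by_cases hwv : w = v
        · exact Or.inl hwv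
        · right
          obtain ⟨d, hd, hdw⟩ := exists_cover_le hac hS
            ⟨mem_upSet.mp hw, fun h => hwv h.symm⟩
          exact Finset.mem_biUnion.mpr ⟨d, mem_coversE.mpr hd, mem_upSet.mpr hdw⟩
      have hsum : ∑ d ∈ coversE E v, (upSet E d).card ≤
          (coversE E v).card * sfun N Ω.card h := by
        have := Finset.sum_le_card_nsmul (coversE E v) (fun d => (upSet E d).card)
          (sfun N Ω.card h) (fun d hd => (IHd d hd).1)
        simpa [smul_eq_mul] using this
      have hT := CodeS_card Ω N h
      calc (upSet E v).card ≤ (insert v ((coversE E v).biUnion (upSet E))).card :=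
            Finset.card_le_card hsub
        _ ≤ 1 + ((coversE E v).biUnion (upSet E)).card := by
            have := Finset.card_insert_le v ((coversE E v).biUnion (upSet E))
            omega
        _ ≤ 1 + ∑ d ∈ coversE E v, (upSet E d).card := by
            have := Finset.card_biUnion_le (s := coversE E v) (t := upSet E)
            omega
        _ ≤ 1 + (coversE E v).card * sfun N Ω.card h := by omega
        _ ≤ 1 + 2 * (CodeS Ω N h).card * sfun N Ω.card h := by
            have := Nat.mul_le_mul_right (sfun N Ω.card h) hcovcard
            omega
        _ ≤ 1 + 2 * Tfun N Ω.card h * sfun N Ω.card h := by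
            have := Nat.mul_le_mul_right (sfun N Ω.card h)
              (Nat.mul_le_mul_left 2 hT)
            omega
        _ = sfun N Ω.card (h+1) := rfl
    · -- membership in CodeS (h+1)
      have hM : (coversE E v).val.map (τ E label) ≤ (CodeS Ω N h).val + (CodeS Ω N h).val := by
        rw [Multiset.le_iff_count]
        intro a
        by_cases hpos : 0 < Multiset.count a ((coversE E v).val.map (τ E label))
        · have haS : a ∈ CodeS Ω N h := by
            have : a ∈ (coversE E v).val.map (τ E label) := Multiset.count_pos.mp hpos
            obtain ⟨d, hd, rfl⟩ := Multiset.mem_map.mp this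
            exact (IHd d hd).2
          have hc2 : Multiset.count a ((coversE E v).val.map (τ E label)) ≤ 2 := by
            rw [Multiset.count_map]
            have : Multiset.filter (fun d => a = τ E label d) (coversE E v).val =
                Multiset.filter (fun d => τ E label d = a) (coversE E v).val := by
              apply Multiset.filter_congr
              intro d _
              exact ⟨Eq.symm, Eq.symm⟩
            rw [this]
            have := fiber_le_two hac hS h2 v a
            simpa [Finset.card_filter, Finset.filter] using this
          have hcnt : Multiset.count a ((CodeS Ω N h).val + (CodeS Ω N h).val) = 2 := by
            rw [Multiset.count_add, Multiset.count_eq_one_of_mem (CodeS Ω N h).nodup haS]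
          omega
        · omega
      rw [tau_spec hac v]
      simp only [CodeS, Finset.mem_image]
      refine ⟨((label v, Dset E v), (coversE E v).val.map (τ E label)), ?_, rfl⟩
      rw [Finset.mem_product]
      constructor
      · rw [Finset.mem_product]
        exact ⟨label_mem hac hl1 hl2 v, Dset_mem hac hS hh v⟩
      · rw [Multiset.mem_toFinset, Multiset.mem_powerset]
        exact hM

end main

end TRD


/-- For a finite set `Ω` of formulas, any 2-reduced lrDAG satisfying the separation
property (S), of height at most `N`, whose node labels are multisets over `Ω` in which
no formula occurs more than twice, has a number of nodes bounded by a function of `N`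
and `|Ω|` only. -/
theorem two_reduced_lrDAG_card_bound :
    ∃ B : ℕ → ℕ → ℕ,
      ∀ (F : Type) [DecidableEq F] (V : Type) [Fintype V]
        (Ω : Finset F) (N : ℕ)
        (E : V → V → Prop) (label : V → Multiset F) (root : V),
        -- lrDAG: rooted and no directed cycles
        (∀ v, Relation.ReflTransGen E root v) →
        (∀ v, ¬ Relation.TransGen E v v) →
        -- height at most N
        (∀ (n : ℕ) (f : ℕ → V), (∀ i < n, E (f i) (f (i + 1))) → n ≤ N) →
        -- labels are multisets over Ω with no formula occurring more than twice
        (∀ v A, A ∈ label v → A ∈ Ω) →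
        (∀ v A, (label v).count A ≤ 2) →
        -- separation property (S)
        (∀ x y : V, ¬ Relation.ReflTransGen E x y → ¬ Relation.ReflTransGen E y x →
          ∀ v, ¬ (Relation.ReflTransGen E x v ∧ Relation.ReflTransGen E y v)) →
        -- 2-reduced: no node has three distinct children witnessing a non-trivial
        -- label-preserving automorphism fixing everything outside their upward closures
        (∀ (x : V) (c : Fin 3 → V), (∀ i, E x (c i)) → Function.Injective c →
          ∀ π : V ≃ V, (∀ a b, E a b ↔ E (π a) (π b)) →
            (∀ v, label (π v) = label v) →
            (∀ v, (∀ i, ¬ Relation.ReflTransGen E (c i) v) → π v = v) →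
            π = Equiv.refl V) →
        Fintype.card V ≤ B N Ω.card := by
  refine ⟨fun N k => TRD.sfun N k N, ?_⟩
  intro F _ V _ Ω N E label root hroot hac hh hl1 hl2 hSep h2
  have hS : ∀ x y : V, ¬ TRD.rle E x y → ¬ TRD.rle E y x →
      ∀ v, ¬ (TRD.rle E x v ∧ TRD.rle E y v) := hSep
  have hl2' : ∀ (v : V) (A : F),
      @Multiset.count F (fun a b => Classical.propDecidable (a = b)) A (label v) ≤ 2 := by
    intro v A
    have h := hl2 v A
    convert h using 2
  have hmain := TRD.main_bound (E := E) (label := label) (Ω := Ω) (N := N)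
    hac hS hh hl1 hl2' h2 N root (fun n f _ hf => hh n f hf)
  have huniv : TRD.upSet E root = Finset.univ := by
    ext w
    simp only [Finset.mem_univ, iff_true]
    exact TRD.mem_upSet.mpr (hroot w)
  have := hmain.1
  rwa [huniv, Finset.card_univ] at this
end
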